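/- arXiv:1102.2799 — 5 statements merged into one kernel-verified Lean document; each statement's English description precedes it below -/
import Mathlib

section
/- For any frequency permutation π in S_n^λ (the set of permutations of the multiset with each symbol 1,…,m appearing exactly λ times, n = mλ), the ball of radius r centered at π under Chebyshev distance has the same cardinality as the ball of radius r centered at the identity frequency permutation e, where e_i = ⌈i/λ⌉. -/
open scoped Classical

/-- `π` is a frequency permutation over `{1,…,m}` (represented 0-based as `Fin m`)
of length `n = m*lam`, i.e. each symbol appears exactly `lam` times. -/
def isFreqPerm (m lam : ℕ) (π : Fin (m * lam) → Fin m) : Prop :=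
  ∀ k : Fin m, (Finset.univ.filter (fun i => π i = k)).card = lam

noncomputable def FPset (m lam : ℕ) : Finset (Fin (m * lam) → Fin m) :=
  Finset.univ.filter (isFreqPerm m lam)

/-- Chebyshev distance `max_i |x_i - y_i|`. -/
def cheb {n m : ℕ} (x y : Fin n → Fin m) : ℕ :=
  Finset.univ.sup fun i => Nat.dist (x i).val (y i).val

/-- The identity frequency permutation `e_i = ⌈i/λ⌉` (0-based: `e_i = i / λ`). -/
def ident (m lam : ℕ) : Fin (m * lam) → Fin m := fun i =>
  ⟨i.val / lam, Nat.div_lt_of_lt_mul (lt_of_lt_of_eq i.isLt (Nat.mul_comm m lam))⟩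

/-- Ball of radius `d` centered at `π` inside `S_n^λ` under Chebyshev distance. -/
noncomputable def ball (m lam d : ℕ) (π : Fin (m * lam) → Fin m) :
    Finset (Fin (m * lam) → Fin m) :=
  (FPset m lam).filter fun ρ => cheb ρ π ≤ d

noncomputable def Vinf (m lam d : ℕ) : ℕ := (ball m lam d (ident m lam)).card

lemma sup_comp_equiv {n : ℕ} (σ : Fin n ≃ Fin n) (g : Fin n → ℕ) :
    (Finset.univ.sup fun i => g (σ i)) = Finset.univ.sup g := by
  apply le_antisymm
  · exact Finset.sup_le fun i _ => Finset.le_sup (Finset.mem_univ _)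
  · refine Finset.sup_le fun j _ => ?_
    have h := Finset.le_sup (f := fun i => g (σ i)) (Finset.mem_univ (σ.symm j))
    simpa using h

lemma card_filter_comp {n m : ℕ} (σ : Fin n ≃ Fin n) (ρ : Fin n → Fin m) (k : Fin m) :
    (Finset.univ.filter fun i => ρ (σ i) = k).card
      = (Finset.univ.filter fun i => ρ i = k).card := by
  refine Finset.card_bij' (fun i _ => σ i) (fun j _ => σ.symm j) ?_ ?_ ?_ ?_ <;>
    simp [Finset.mem_filter]

lemma ident_freq (m lam : ℕ) (hlam : 0 < lam) : isFreqPerm m lam (ident m lam) := by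
  intro k
  have : (Finset.univ.filter fun i : Fin (m * lam) => ident m lam i = k).card
      = (Finset.range lam).card := by
    refine Finset.card_bij' (fun i _ => i.val % lam)
      (fun j hj => ⟨k.val * lam + j, ?_⟩) ?_ ?_ ?_ ?_
    · have hj' := Finset.mem_range.mp hj
      calc k.val * lam + j < k.val * lam + lam := by omega
        _ = (k.val + 1) * lam := by ring
        _ ≤ m * lam := Nat.mul_le_mul_right _ (by omega)
    · intro a ha
      exact Finset.mem_range.mpr (Nat.mod_lt _ hlam)
    · intro b hb
      have hb' := Finset.mem_range.mp hb
      refine Finset.mem_filter.mpr ⟨Finset.mem_univ _, ?_⟩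
      apply Fin.ext
      show (k.val * lam + b) / lam = k.val
      rw [Nat.mul_comm k.val lam, Nat.mul_add_div hlam, Nat.div_eq_of_lt hb',
        Nat.add_zero]
    · intro a ha
      replace ha := (Finset.mem_filter.mp ha).2
      have hk : a.val / lam = k.val := congrArg Fin.val ha
      apply Fin.ext
      show k.val * lam + a.val % lam = a.val
      have h2 := Nat.div_add_mod a.val lam
      rw [hk] at h2
      rw [Nat.mul_comm]
      exact h2
    · intro b hb
      have hb' := Finset.mem_range.mp hb
      show (k.val * lam + b) % lam = b
      rw [Nat.mul_comm k.val lam, Nat.mul_add_mod, Nat.mod_eq_of_lt hb']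
  simpa using this

lemma exists_sigma (m lam : ℕ) (hlam : 0 < lam) (π : Fin (m * lam) → Fin m)
    (hπ : isFreqPerm m lam π) :
    ∃ σ : Fin (m * lam) ≃ Fin (m * lam), ∀ i, π (σ i) = ident m lam i := by
  have e : ∀ k : Fin m, {i // ident m lam i = k} ≃ {i // π i = k} := by
    intro k
    apply Fintype.equivOfCardEq
    rw [Fintype.card_subtype, Fintype.card_subtype, ident_freq m lam hlam k, hπ k]
  refine ⟨(Equiv.sigmaFiberEquiv (ident m lam)).symm.trans
    ((Equiv.sigmaCongrRight e).trans (Equiv.sigmaFiberEquiv π)), fun i => ?_⟩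
  simp [Equiv.sigmaFiberEquiv, Equiv.sigmaCongrRight]
  exact (e (ident m lam i) ⟨i, rfl⟩).property

theorem ball_card_eq_ball_ident (m lam r : ℕ) (hlam : 0 < lam)
    (π : Fin (m * lam) → Fin m) (hπ : isFreqPerm m lam π) :
    (ball m lam r π).card = (ball m lam r (ident m lam)).card := by
  obtain ⟨σ, hσ⟩ := exists_sigma m lam hlam π hπ
  have mem_iff : ∀ ρ : Fin (m * lam) → Fin m,
      ρ ∈ ball m lam r π ↔ (fun i => ρ (σ i)) ∈ ball m lam r (ident m lam) := by
    intro ρ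
    simp only [ball, FPset, Finset.mem_filter, Finset.mem_univ, true_and]
    constructor
    · rintro ⟨hf, hc⟩
      refine ⟨fun k => ?_, ?_⟩
      · rw [card_filter_comp σ ρ k]; exact hf k
      · have : cheb (fun i => ρ (σ i)) (ident m lam) = cheb ρ π := by
          unfold cheb
          have : ∀ i, Nat.dist (ρ (σ i)).val ((ident m lam i)).val
              = Nat.dist (ρ (σ i)).val ((π (σ i))).val := by
            intro i; rw [hσ i]
          rw [Finset.sup_congr rfl (fun i _ => this i)]
          exact sup_comp_equiv σ (fun i => Nat.dist (ρ i).val ((π i)).val)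
        rw [this]; exact hc
    · rintro ⟨hf, hc⟩
      refine ⟨fun k => ?_, ?_⟩
      · rw [← card_filter_comp σ ρ k]; exact hf k
      · have : cheb (fun i => ρ (σ i)) (ident m lam) = cheb ρ π := by
          unfold cheb
          have h1 : ∀ i, Nat.dist (ρ (σ i)).val ((ident m lam i)).val
              = Nat.dist (ρ (σ i)).val ((π (σ i))).val := by
            intro i; rw [hσ i]
          rw [Finset.sup_congr rfl (fun i _ => h1 i)]
          exact sup_comp_equiv σ (fun i => Nat.dist (ρ i).val ((π i)).val)
        rw [← this]; exact hc
  refine Finset.card_bij' (fun ρ _ => fun i => ρ (σ i))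
    (fun ρ _ => fun i => ρ (σ.symm i)) ?_ ?_ ?_ ?_
  · intro ρ hρ; exact (mem_iff ρ).mp hρ
  · intro ρ hρ
    rw [mem_iff]
    simpa using hρ
  · intro ρ _; funext i; simp
  · intro ρ _; funext i; simp
end

section
/- The number of frequency permutations π ∈ S_n^λ with d_max(e, π) ≤ d equals per(A)/ (λ!)^m, where A is the n×n 0-1 matrix with A_{i,j} = 1 iff |⌈i/λ⌉ − ⌈j/λ⌉| ≤ d, and per denotes the permanent. -/
open scoped Classical

/-- The permanent of a square matrix. -/
def perMat {n : ℕ} (A : Matrix (Fin n) (Fin n) ℕ) : ℕ :=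
  ∑ σ : Equiv.Perm (Fin n), ∏ i, A i (σ i)

/-- The 0-1 matrix `A^{(λ,n,d)}` with `a_{i,j} = 1` iff `|⌈i/λ⌉ - ⌈j/λ⌉| ≤ d`
(indices 0-based, so `⌈i/λ⌉` becomes `i/λ + 1`). -/
def Amat (m lam d : ℕ) : Matrix (Fin (m * lam)) (Fin (m * lam)) ℕ :=
  fun i j => if Nat.dist (i.val / lam) (j.val / lam) ≤ d then 1 else 0

/-- Each block `{j : j / λ = k}` has exactly `λ` elements. -/
lemma block_card (m lam : ℕ) (hlam : 0 < lam) (k : Fin m) :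
    Fintype.card {j : Fin (m * lam) // ident m lam j = k} = lam := by
  classical
  have hbound : ∀ a : Fin lam, lam * k.val + a.val < m * lam := by
    intro a
    calc lam * k.val + a.val < lam * k.val + lam := Nat.add_lt_add_left a.isLt _
      _ = lam * (k.val + 1) := (Nat.mul_succ lam k.val).symm
      _ ≤ lam * m := Nat.mul_le_mul_left lam k.isLt
      _ = m * lam := Nat.mul_comm lam m
  let g : Fin lam → {j : Fin (m * lam) // ident m lam j = k} := fun a =>
    ⟨⟨lam * k.val + a.val, hbound a⟩, by
      apply Fin.ext
      show (lam * k.val + a.val) / lam = k.val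
      rw [Nat.mul_add_div hlam, Nat.div_eq_of_lt a.isLt, Nat.add_zero]⟩
  have hg : Function.Bijective g := by
    constructor
    · intro a b hab
      have : lam * k.val + a.val = lam * k.val + b.val := congrArg (fun x => (x.val : Fin (m*lam)).val) hab
      exact Fin.ext (Nat.add_left_cancel this)
    · rintro ⟨j, hj⟩
      have hjk : j.val / lam = k.val := congrArg Fin.val hj
      have hmod := Nat.div_add_mod j.val lam
      have hlt := Nat.mod_lt j.val hlam
      refine ⟨⟨j.val % lam, hlt⟩, ?_⟩
      apply Subtype.ext
      apply Fin.ext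
      show lam * k.val + j.val % lam = j.val
      rw [← hjk]; exact hmod
  calc Fintype.card {j : Fin (m * lam) // ident m lam j = k}
      = Fintype.card (Fin lam) := (Fintype.card_congr (Equiv.ofBijective g hg)).symm
    _ = lam := Fintype.card_fin lam

/-- The number of permutations preserving all blocks is `(λ!)^m`. -/
lemma stab_card (m lam : ℕ) (hlam : 0 < lam) :
    Fintype.card {τ : Equiv.Perm (Fin (m * lam)) // ident m lam ∘ τ = ident m lam}
      = (Nat.factorial lam) ^ m := by
  classical
  rw [DomMulAct.stabilizer_card (ident m lam)]
  have : ∀ k : Fin m, (Fintype.card {a : Fin (m * lam) // ident m lam a = k}).factorial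
      = Nat.factorial lam := fun k => by rw [block_card m lam hlam k]
  rw [Finset.prod_congr rfl (fun k _ => this k), Finset.prod_const, Finset.card_univ,
    Fintype.card_fin]

theorem Vinf_eq_permanent_div (m lam d : ℕ) (hlam : 0 < lam) :
    Vinf m lam d = perMat (Amat m lam d) / (Nat.factorial lam) ^ m := by
  classical
  set f : Equiv.Perm (Fin (m * lam)) → (Fin (m * lam) → Fin m) :=
    fun σ i => ident m lam (σ i) with hf
  set S : Finset (Equiv.Perm (Fin (m * lam))) :=
    Finset.univ.filter (fun σ => ∀ i, Nat.dist (i.val / lam) ((σ i).val / lam) ≤ d) with hSdef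
  have hper : perMat (Amat m lam d) = S.card := by
    unfold perMat Amat
    calc ∑ σ : Equiv.Perm (Fin (m * lam)), ∏ i,
          (if Nat.dist (i.val / lam) ((σ i).val / lam) ≤ d then 1 else 0)
        = ∑ σ : Equiv.Perm (Fin (m * lam)),
            (if ∀ i, Nat.dist (i.val / lam) ((σ i).val / lam) ≤ d then 1 else 0) := by
          refine Finset.sum_congr rfl fun σ _ => ?_
          rw [Finset.prod_boole]
          simp
      _ = S.card := by rw [Finset.sum_boole]; simp [hSdef]
  have hmaps : ∀ σ ∈ S, f σ ∈ ball m lam d (ident m lam) := by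
    intro σ hσ
    rw [hSdef, Finset.mem_filter] at hσ
    obtain ⟨-, hσ⟩ := hσ
    unfold ball FPset
    rw [Finset.mem_filter, Finset.mem_filter]
    refine ⟨⟨Finset.mem_univ _, ?_⟩, ?_⟩
    · intro k
      calc (Finset.univ.filter (fun i => f σ i = k)).card
          = Fintype.card {i : Fin (m * lam) // ident m lam (σ i) = k} :=
            (Fintype.card_subtype _).symm
        _ = Fintype.card {j : Fin (m * lam) // ident m lam j = k} :=
            Fintype.card_congr (Equiv.subtypeEquiv σ (fun i => Iff.rfl))
        _ = lam := block_card m lam hlam k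
    · unfold cheb
      apply Finset.sup_le
      intro i _
      have := hσ i
      simpa [hf, ident, Nat.dist_comm] using this
  have hfiber : ∀ ρ ∈ ball m lam d (ident m lam),
      (S.filter (fun σ => f σ = ρ)).card = (Nat.factorial lam) ^ m := by
    intro ρ hρ
    have hρ' : isFreqPerm m lam ρ ∧ cheb ρ (ident m lam) ≤ d := by
      simpa [ball, FPset, Finset.mem_filter] using hρ
    obtain ⟨hfp, hch⟩ := hρ'
    have hch' : ∀ i, Nat.dist (ρ i).val (i.val / lam) ≤ d := by
      intro i
      refine le_trans ?_ hch
      have := Finset.le_sup (f := fun i => Nat.dist (ρ i).val ((ident m lam i)).val)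
        (Finset.mem_univ i)
      simpa [ident, cheb] using this
    have hS : S.filter (fun σ => f σ = ρ) = Finset.univ.filter (fun σ => f σ = ρ) := by
      ext σ
      rw [hSdef]
      simp only [Finset.mem_filter, Finset.mem_univ, true_and]
      constructor
      · rintro ⟨-, h⟩; exact h
      · intro h
        refine ⟨fun i => ?_, h⟩
        have hv : (σ i).val / lam = (ρ i).val := by
          have : f σ i = ρ i := by rw [h]
          exact congrArg Fin.val this
        rw [hv, Nat.dist_comm]
        exact hch' i
    rw [hS]
    have hcardfib : ∀ k : Fin m, Fintype.card {i : Fin (m * lam) // ρ i = k}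
        = Fintype.card {j : Fin (m * lam) // ident m lam j = k} := by
      intro k
      rw [block_card m lam hlam k, Fintype.card_subtype]
      exact hfp k
    let e : ∀ k : Fin m, {i : Fin (m * lam) // ρ i = k} ≃ {j : Fin (m * lam) // ident m lam j = k} :=
      fun k => Fintype.equivOfCardEq (hcardfib k)
    let σ₀ : Equiv.Perm (Fin (m * lam)) := Equiv.ofFiberEquiv e
    have hσ₀ : ∀ i, ident m lam (σ₀ i) = ρ i := fun i => Equiv.ofFiberEquiv_map e i
    have hiff : ∀ σ : Equiv.Perm (Fin (m * lam)),
        f σ = ρ ↔ ident m lam ∘ ((Equiv.mulRight σ₀⁻¹) σ) = ident m lam := by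
      intro σ
      have happ : ∀ i, ((Equiv.mulRight σ₀⁻¹) σ) i = σ (σ₀⁻¹ i) := fun i => rfl
      constructor
      · intro h
        funext i
        rw [Function.comp_apply, happ i]
        have h1 : ident m lam (σ (σ₀⁻¹ i)) = ρ (σ₀⁻¹ i) := congrFun h (σ₀⁻¹ i)
        rw [h1, ← hσ₀ (σ₀⁻¹ i), show σ₀ (σ₀⁻¹ i) = i from Equiv.apply_symm_apply σ₀ i]
      · intro h
        funext i
        show ident m lam (σ i) = ρ i
        have h1 : ident m lam (σ (σ₀⁻¹ (σ₀ i))) = ident m lam (σ₀ i) := congrFun h (σ₀ i)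
        rw [show σ₀⁻¹ (σ₀ i) = i from Equiv.symm_apply_apply σ₀ i] at h1
        rw [h1, hσ₀ i]
    calc (Finset.univ.filter (fun σ => f σ = ρ)).card
        = Fintype.card {σ : Equiv.Perm (Fin (m * lam)) // f σ = ρ} :=
          (Fintype.card_subtype _).symm
      _ = Fintype.card {τ : Equiv.Perm (Fin (m * lam)) // ident m lam ∘ τ = ident m lam} :=
          Fintype.card_congr (Equiv.subtypeEquiv (Equiv.mulRight σ₀⁻¹) hiff)
      _ = (Nat.factorial lam) ^ m := stab_card m lam hlam
  have hkey : perMat (Amat m lam d) = Vinf m lam d * (Nat.factorial lam) ^ m := by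
    rw [hper, Finset.card_eq_sum_card_fiberwise hmaps,
      Finset.sum_congr rfl hfiber, Finset.sum_const, smul_eq_mul]
    rfl
  rw [hkey, Nat.mul_div_cancel _ (pow_pos (Nat.factorial_pos lam) m)]
end

section
/- The number V_∞(λ, λm, d) of elements of S_{λm}^λ within Chebyshev distance d of the identity frequency permutation equals the number of walks of length m from the vertex [1, dλ] back to itself in the directed graph H_{λ,d} whose vertices are the dλ-element subsets of the integer interval [−dλ+1, dλ], with an edge from P to P′ iff there exists a λ-element subset X of P ∪ [dλ+1, dλ+λ] such that (P ∪ [dλ+1, dλ+λ]) \ X contains no element ≤ −dλ+λ and P′ = (((P ∪ [dλ+1, dλ+λ]) \ X) ⊕ (−λ)) \ [dλ+1, dλ+λ], where S ⊕ z = {s+z : s ∈ S}. -/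
open scoped Classical

/-- The interval `[dλ+1, dλ+λ]` of integers. -/
noncomputable def Qset (lam d : ℕ) : Finset ℤ := Finset.Icc ((d * lam : ℤ) + 1) ((d * lam : ℤ) + lam)

/-- Vertices of `H_{λ,d}`: `dλ`-element subsets of `[-dλ+1, dλ]`. -/
def Hvert (lam d : ℕ) (P : Finset ℤ) : Prop :=
  P ⊆ Finset.Icc (-(d * lam : ℤ) + 1) (d * lam) ∧ P.card = d * lam

/-- Edge relation of `H_{λ,d}`. -/
def Hedge (lam d : ℕ) (P P' : Finset ℤ) : Prop :=
  ∃ X ⊆ P ∪ Qset lam d, X.card = lam ∧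
    (∀ s ∈ (P ∪ Qset lam d) \ X, -(d * lam : ℤ) + lam < s) ∧
    P' = (((P ∪ Qset lam d) \ X).image fun s => s - (lam : ℤ)) \ Qset lam d

/-- The vertex set of `H_{λ,d}` as a `Finset` of `Finset ℤ`. -/
noncomputable def verts (lam d : ℕ) : Finset (Finset ℤ) :=
  (Finset.Icc (-(d * lam : ℤ) + 1) (d * lam)).powerset.filter fun P => P.card = d * lam

/-- Out-degree of a vertex `P` of `H_{λ,d}`, counting the valid subsets `X`. -/
noncomputable def outdeg (lam d : ℕ) (P : Finset ℤ) : ℕ :=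
  ((P ∪ Qset lam d).powerset.filter fun X => X.card = lam ∧
    ∀ s ∈ (P ∪ Qset lam d) \ X, -(d * lam : ℤ) + lam < s).card

namespace VWaux

variable (m lam d : ℕ)


noncomputable def pval (π : Fin (m * lam) → Fin m) (i : ℤ) : ℕ :=
  if h : 0 ≤ i ∧ i < ((m * lam : ℕ) : ℤ) then (π ⟨i.toNat, by omega⟩).val else 0

def Wcond (π : Fin (m * lam) → Fin m) (j : ℕ) (s : ℤ) : Prop :=
  ((m * lam : ℕ) : ℤ) ≤ s - 1 + ((j * lam : ℕ) : ℤ) ∨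
    (0 ≤ s - 1 + ((j * lam : ℕ) : ℤ) ∧ s - 1 + ((j * lam : ℕ) : ℤ) < ((m * lam : ℕ) : ℤ) ∧
      (j : ℤ) ≤ (pval m lam π (s - 1 + ((j * lam : ℕ) : ℤ)) : ℤ))

noncomputable def Wmap (π : Fin (m * lam) → Fin m) (j : ℕ) : Finset ℤ :=
  (Finset.Icc (-((d * lam : ℕ) : ℤ) + 1) ((d * lam : ℕ) : ℤ)).filter (Wcond m lam π j)

lemma Qcast : ((d : ℤ) * lam) = ((d * lam : ℕ) : ℤ) := by push_cast; ring

lemma mem_Qset (s : ℤ) : s ∈ Qset lam d ↔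
    ((d * lam : ℕ) : ℤ) + 1 ≤ s ∧ s ≤ ((d * lam : ℕ) : ℤ) + lam := by
  rw [Qset, Finset.mem_Icc, Qcast]

lemma pval_spec (hlam : 0 < lam) (π : Fin (m * lam) → Fin m)
    (hd : ∀ i, Nat.dist (π i).val (i.val / lam) ≤ d)
    {i : ℤ} (h0 : 0 ≤ i) (h1 : i < ((m * lam : ℕ) : ℤ)) :
    ∃ q : ℕ, ((q * lam : ℕ) : ℤ) ≤ i ∧ i < ((q * lam : ℕ) : ℤ) + lam ∧
      pval m lam π i < m ∧
      ((pval m lam π i * lam : ℕ) : ℤ) ≤ ((q * lam : ℕ) : ℤ) + ((d * lam : ℕ) : ℤ) ∧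
      ((q * lam : ℕ) : ℤ) ≤ ((pval m lam π i * lam : ℕ) : ℤ) + ((d * lam : ℕ) : ℤ) ∧
      pval m lam π i ≤ q + d ∧ q ≤ pval m lam π i + d := by
  have hiN : i.toNat < m * lam := by omega
  have hpv : pval m lam π i = (π ⟨i.toNat, hiN⟩).val := by
    rw [pval, dif_pos ⟨h0, h1⟩]
  set qn := i.toNat / lam with hq
  have h2 : qn * lam + i.toNat % lam = i.toNat := by
    rw [mul_comm]; exact Nat.div_add_mod _ _
  have h3 : i.toNat % lam < lam := Nat.mod_lt _ hlam
  have hdist := hd ⟨i.toNat, hiN⟩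
  have hdist' : (π ⟨i.toNat, hiN⟩).val ≤ qn + d ∧ qn ≤ (π ⟨i.toNat, hiN⟩).val + d := by
    simp only [Nat.dist] at hdist; omega
  rw [hpv]
  set a := (π ⟨i.toNat, hiN⟩).val with ha
  refine ⟨qn, by omega, by omega, (π _).isLt, ?_, ?_, hdist'.1, hdist'.2⟩
  · have : a * lam ≤ qn * lam + d * lam := by
      calc a * lam ≤ (qn + d) * lam := Nat.mul_le_mul_right _ hdist'.1
      _ = qn * lam + d * lam := by ring
    omega
  · have : qn * lam ≤ a * lam + d * lam := by
      calc qn * lam ≤ (a + d) * lam := Nat.mul_le_mul_right _ hdist'.2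
      _ = a * lam + d * lam := by ring
    omega



noncomputable def XkT (m lam d : ℕ) (π : Fin (m * lam) → Fin m) (k : ℕ) : Finset ℤ :=
  (Wmap m lam d π k ∪ Qset lam d).filter fun s =>
    0 ≤ s - 1 + ((k * lam : ℕ) : ℤ) ∧ s - 1 + ((k * lam : ℕ) : ℤ) < ((m * lam : ℕ) : ℤ) ∧
      pval m lam π (s - 1 + ((k * lam : ℕ) : ℤ)) = k

section Edge
variable (m lam d : ℕ) (hlam : 0 < lam) (π : Fin (m * lam) → Fin m)
  (hfp : isFreqPerm m lam π)
  (hd : ∀ i, Nat.dist (π i).val (i.val / lam) ≤ d) (k : ℕ) (hk : k < m)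

include hlam hd hk in
lemma mem_Xk_iff (s : ℤ) :
    s ∈ XkT m lam d π k ↔ ∃ i : Fin (m * lam), π i = ⟨k, hk⟩ ∧ s = (i : ℤ) + 1 - ((k * lam : ℕ) : ℤ) := by
  constructor
  · intro hs
    obtain ⟨hsu, h0, h1, h2⟩ := Finset.mem_filter.1 hs
    set i := s - 1 + ((k * lam : ℕ) : ℤ) with hi
    have hiN : i.toNat < m * lam := by omega
    refine ⟨⟨i.toNat, hiN⟩, ?_, by push_cast; omega⟩
    have hpv : pval m lam π i = (π ⟨i.toNat, hiN⟩).val := by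
      rw [pval, dif_pos ⟨h0, h1⟩]
    exact Fin.ext (by rw [← hpv, h2])
  · rintro ⟨i, hπi, rfl⟩
    have h0 : (0:ℤ) ≤ (i:ℤ) ∧ ((i:ℤ)) < ((m * lam : ℕ) : ℤ) := by
      constructor <;> [positivity; exact_mod_cast i.isLt]
    have hpv : pval m lam π (i:ℤ) = (π i).val := by
      rw [pval, dif_pos h0]; congr 1; all_goals exact Fin.ext (by simp)
    have hpvk : pval m lam π (i:ℤ) = k := by rw [hpv, hπi]
    have harg : (i:ℤ) + 1 - ((k * lam : ℕ) : ℤ) - 1 + ((k * lam : ℕ) : ℤ) = (i:ℤ) := by ring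
    obtain ⟨q, hq1, hq2, hq3, hq4, hq5, -, -⟩ := pval_spec m lam d hlam π hd h0.1 h0.2
    rw [hpvk] at hq4 hq5
    refine Finset.mem_filter.2 ⟨?_, ?_⟩
    · by_cases hcase : (i:ℤ) + 1 - ((k * lam : ℕ) : ℤ) ≤ ((d * lam : ℕ) : ℤ)
      · refine Finset.mem_union_left _ (Finset.mem_filter.2 ⟨Finset.mem_Icc.2 ⟨by omega, hcase⟩, ?_⟩)
        rw [Wcond, harg]
        exact Or.inr ⟨h0.1, h0.2, by omega⟩
      · exact Finset.mem_union_right _ ((mem_Qset lam d _).2 (by omega))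
    · rw [harg]
      exact ⟨h0.1, h0.2, hpvk⟩

include hlam hfp hd hk in
lemma card_Xk : (XkT m lam d π k).card = lam := by
  have hXimg : XkT m lam d π k =
      (Finset.univ.filter fun i => π i = ⟨k, hk⟩).image
        (fun i : Fin (m * lam) => (i : ℤ) + 1 - ((k * lam : ℕ) : ℤ)) := by
    ext s
    rw [mem_Xk_iff m lam d hlam π hd k hk]
    simp [eq_comm]
  rw [hXimg, Finset.card_image_of_injective _ ?_, hfp ⟨k, hk⟩]
  intro a b hab
  have h2 : ((a:ℕ):ℤ) = ((b:ℕ):ℤ) := by simpa using hab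
  exact Fin.ext (by exact_mod_cast h2)

include hlam hd hk in
lemma union_bound (s : ℤ) (hs : s ∈ Wmap m lam d π k ∪ Qset lam d) :
    -((d * lam : ℕ) : ℤ) + 1 ≤ s ∧ s ≤ ((d * lam : ℕ) : ℤ) + lam := by
  rcases Finset.mem_union.1 hs with h | h
  · have := Finset.mem_Icc.1 (Finset.mem_filter.1 h).1; omega
  · have := (mem_Qset lam d s).1 h; omega

include hlam hd hk in
lemma rem_bound (s : ℤ) (hs : s ∈ (Wmap m lam d π k ∪ Qset lam d) \ XkT m lam d π k) :
    -((d * lam : ℕ) : ℤ) + (lam : ℤ) < s := by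
  obtain ⟨hsu, hsx⟩ := Finset.mem_sdiff.1 hs
  set i := s - 1 + ((k * lam : ℕ) : ℤ) with hidef
  have hkm : k * lam + lam ≤ m * lam := by
    calc k * lam + lam = (k+1) * lam := by ring
    _ ≤ m * lam := Nat.mul_le_mul_right _ hk
  rcases Finset.mem_union.1 hsu with h | h
  · obtain ⟨hicc, hcond⟩ := Finset.mem_filter.1 h
    rw [Wcond, ← hidef] at hcond
    rcases hcond with hph | ⟨h0, h1, h2⟩
    · -- phantom
      omega
    · -- real, pval ≥ k, and not in Xk so pval ≠ k
      have hne : pval m lam π i ≠ k := by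
        intro hc
        exact hsx (Finset.mem_filter.2 ⟨hsu, h0, h1, hc⟩)
      have hge : k + 1 ≤ pval m lam π i := by omega
      obtain ⟨q, hq1, hq2, hq3, hq4, hq5, -, -⟩ := pval_spec m lam d hlam π hd h0 h1
      have hmono : k * lam + lam ≤ pval m lam π i * lam := by
        calc k * lam + lam = (k+1) * lam := by ring
        _ ≤ pval m lam π i * lam := Nat.mul_le_mul_right _ hge
      omega
  · have hQ := (mem_Qset lam d s).1 h
    by_cases h0 : 0 ≤ i
    · by_cases h1 : i < ((m * lam : ℕ) : ℤ)
      · obtain ⟨q, hq1, hq2, hq3, hq4, hq5, -, -⟩ := pval_spec m lam d hlam π hd h0 h1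
        have hgek : k ≤ pval m lam π i := by
          by_contra hc
          have h' : pval m lam π i * lam + lam ≤ k * lam := by
            calc pval m lam π i * lam + lam = (pval m lam π i + 1) * lam := by ring
            _ ≤ k * lam := Nat.mul_le_mul_right _ (by omega)
          omega
        have hne : pval m lam π i ≠ k := by
          intro hc
          exact hsx (Finset.mem_filter.2 ⟨hsu, h0, h1, hc⟩)
        have hmono : k * lam + lam ≤ pval m lam π i * lam := by
          calc k * lam + lam = (k+1) * lam := by ring
          _ ≤ pval m lam π i * lam := Nat.mul_le_mul_right _ (by omega)
        omega
      · omega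
    · omega

include hlam hd hk in
lemma Wnext :
    Wmap m lam d π (k+1) =
      (((Wmap m lam d π k ∪ Qset lam d) \ XkT m lam d π k).image fun s => s - (lam : ℤ))
        \ Qset lam d := by
  have hklZ : (((k+1) * lam : ℕ) : ℤ) = ((k * lam : ℕ) : ℤ) + lam := by push_cast; ring
  ext t
  constructor
  · intro ht
    obtain ⟨hticc, htcond⟩ := Finset.mem_filter.1 ht
    rw [Finset.mem_Icc] at hticc
    rw [Wcond] at htcond
    refine Finset.mem_sdiff.2 ⟨?_, fun hQ => by have := (mem_Qset lam d t).1 hQ; omega⟩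
    refine Finset.mem_image.2 ⟨t + lam, Finset.mem_sdiff.2 ⟨?_, ?_⟩, by ring⟩
    · -- t + lam ∈ W ∪ Q
      by_cases hcase : t + lam ≤ ((d * lam : ℕ) : ℤ)
      · refine Finset.mem_union_left _ (Finset.mem_filter.2
          ⟨Finset.mem_Icc.2 ⟨by omega, hcase⟩, ?_⟩)
        rw [Wcond]
        rcases htcond with hph | ⟨h0, h1, h2⟩
        · exact Or.inl (by omega)
        · refine Or.inr ⟨by omega, by omega, ?_⟩
          have harg : t + (lam:ℤ) - 1 + ((k * lam : ℕ) : ℤ) = t - 1 + (((k+1) * lam : ℕ) : ℤ) := by omega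
          rw [harg]; omega
      · exact Finset.mem_union_right _ ((mem_Qset lam d _).2 ⟨by omega, by omega⟩)
    · -- t + lam ∉ X
      intro hX
      obtain ⟨-, hx0, hx1, hx2⟩ := Finset.mem_filter.1 hX
      have harg : t + (lam:ℤ) - 1 + ((k * lam : ℕ) : ℤ) = t - 1 + (((k+1) * lam : ℕ) : ℤ) := by omega
      rw [harg] at hx0 hx1 hx2
      rcases htcond with hph | ⟨h0, h1, h2⟩
      · omega
      · omega
  · intro ht
    obtain ⟨htimg, htQ⟩ := Finset.mem_sdiff.1 ht
    obtain ⟨s, hs, hst⟩ := Finset.mem_image.1 htimg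
    obtain ⟨hsu, hsx⟩ := Finset.mem_sdiff.1 hs
    have hb := union_bound m lam d hlam π hd k hk s hsu
    have hrb := rem_bound m lam d hlam π hd k hk s hs
    have hts : s = t + lam := by omega
    subst hts
    have harg : t + (lam:ℤ) - 1 + ((k * lam : ℕ) : ℤ) = t - 1 + (((k+1) * lam : ℕ) : ℤ) := by omega
    refine Finset.mem_filter.2 ⟨Finset.mem_Icc.2 ⟨by omega, by omega⟩, ?_⟩
    rw [Wcond]
    rcases Finset.mem_union.1 hsu with h | h
    · obtain ⟨hicc, hcond⟩ := Finset.mem_filter.1 h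
      rw [Wcond, harg] at hcond
      rcases hcond with hph | ⟨h0, h1, h2⟩
      · exact Or.inl (by omega)
      · refine Or.inr ⟨h0, h1, ?_⟩
        have hne : pval m lam π (t - 1 + (((k+1) * lam : ℕ) : ℤ)) ≠ k := by
          intro hc
          exact hsx (Finset.mem_filter.2 ⟨hsu, by rw [harg]; exact ⟨h0, h1, hc⟩⟩)
        omega
    · have hQ := (mem_Qset lam d _).1 h
      set i := t - 1 + (((k+1) * lam : ℕ) : ℤ) with hidef
      have h0 : 0 ≤ i := by omega
      by_cases h1 : i < ((m * lam : ℕ) : ℤ)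
      · obtain ⟨q, hq1, hq2, hq3, hq4, hq5, -, -⟩ := pval_spec m lam d hlam π hd h0 h1
        have hgek : k ≤ pval m lam π i := by
          by_contra hc
          have h' : pval m lam π i * lam + lam ≤ k * lam := by
            calc pval m lam π i * lam + lam = (pval m lam π i + 1) * lam := by ring
            _ ≤ k * lam := Nat.mul_le_mul_right _ (by omega)
          omega
        have hne : pval m lam π i ≠ k := by
          intro hc
          exact hsx (Finset.mem_filter.2 ⟨hsu, by rw [harg]; exact ⟨h0, h1, hc⟩⟩)
        exact Or.inr ⟨h0, h1, by omega⟩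
      · exact Or.inl (by omega)

end Edge


section Edge2
variable (m lam d : ℕ) (hlam : 0 < lam) (π : Fin (m * lam) → Fin m)
  (hfp : isFreqPerm m lam π)
  (hd : ∀ i, Nat.dist (π i).val (i.val / lam) ≤ d)

include hlam hfp hd in
lemma edge_forward (k : ℕ) (hk : k < m) :
    Hedge lam d (Wmap m lam d π k) (Wmap m lam d π (k+1)) :=
  ⟨XkT m lam d π k, Finset.filter_subset _ _, card_Xk m lam d hlam π hfp hd k hk,
    fun s hs => by rw [Qcast]; exact rem_bound m lam d hlam π hd k hk s hs,
    Wnext m lam d hlam π hd k hk⟩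

lemma pval_fin (i : Fin (m * lam)) : pval m lam π (i : ℤ) = (π i).val := by
  have h0 : (0:ℤ) ≤ (i:ℤ) ∧ ((i:ℤ)) < ((m * lam : ℕ) : ℤ) := by
    constructor <;> [positivity; exact_mod_cast i.isLt]
  rw [pval, dif_pos h0]; congr 1; all_goals exact Fin.ext (by simp)

end Edge2

lemma W0 (m lam d : ℕ) (π : Fin (m * lam) → Fin m) :
    Wmap m lam d π 0 = Finset.Icc (1 : ℤ) ((d * lam : ℕ) : ℤ) := by
  ext s
  simp only [Wmap, Wcond, Finset.mem_filter, Finset.mem_Icc]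
  constructor
  · rintro ⟨h1, h2 | ⟨h2, h3, h4⟩⟩ <;>
      simp only [Nat.zero_mul, Nat.cast_zero] at * <;> omega
  · intro h
    refine ⟨by omega, ?_⟩
    by_cases hc : ((m * lam : ℕ) : ℤ) ≤ s - 1 + ((0 * lam : ℕ) : ℤ)
    · exact Or.inl hc
    · refine Or.inr ⟨?_, ?_, by positivity⟩ <;>
        simp only [Nat.zero_mul, Nat.cast_zero] at hc ⊢ <;> omega

lemma Wm (m lam d : ℕ) (hlam : 0 < lam) (π : Fin (m * lam) → Fin m)
    (hd : ∀ i, Nat.dist (π i).val (i.val / lam) ≤ d) :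
    Wmap m lam d π m = Finset.Icc (1 : ℤ) ((d * lam : ℕ) : ℤ) := by
  ext s
  simp only [Wmap, Wcond, Finset.mem_filter, Finset.mem_Icc]
  constructor
  · rintro ⟨h1, h2 | ⟨h2, h3, h4⟩⟩
    · exact ⟨by omega, h1.2⟩
    · obtain ⟨q, _, _, hlt, _, _, _, _⟩ := pval_spec m lam d hlam π hd h2 h3
      omega
  · intro h
    exact ⟨⟨by omega, h.2⟩, Or.inl (by omega)⟩

lemma hedge_card (m lam d : ℕ) (hlam : 0 < lam) (P P' : Finset ℤ)
    (h : Hedge lam d P P')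
    (hP : P ⊆ Finset.Icc (-((d * lam : ℕ) : ℤ) + 1) ((d * lam : ℕ) : ℤ))
    (hcard : P.card = d * lam) :
    P' ⊆ Finset.Icc (-((d * lam : ℕ) : ℤ) + 1) ((d * lam : ℕ) : ℤ) ∧ P'.card = d * lam := by
  obtain ⟨X, hXsub, hXcard, hrem, rfl⟩ := h
  have hdisj : Disjoint P (Qset lam d) := by
    rw [Finset.disjoint_left]
    intro a haP haQ
    have h1 := Finset.mem_Icc.1 (hP haP)
    have h2 := (mem_Qset lam d a).1 haQ
    omega
  have hQcard : (Qset lam d).card = lam := by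
    rw [Qset, Int.card_Icc]; omega
  have hUcard : (P ∪ Qset lam d).card = d * lam + lam := by
    rw [Finset.card_union_of_disjoint hdisj, hcard, hQcard]
  have hScard : ((P ∪ Qset lam d) \ X).card = d * lam := by
    rw [Finset.card_sdiff_of_subset hXsub, hUcard, hXcard]; omega
  have hIcard : (((P ∪ Qset lam d) \ X).image fun s => s - (lam : ℤ)).card = d * lam := by
    rw [Finset.card_image_of_injective _ (fun a b hab => by omega), hScard]
  have hub : ∀ s ∈ (P ∪ Qset lam d) \ X, s ≤ ((d * lam : ℕ) : ℤ) + lam := by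
    intro s hs
    rcases Finset.mem_union.1 (Finset.mem_sdiff.1 hs).1 with h | h
    · have := Finset.mem_Icc.1 (hP h); omega
    · have := (mem_Qset lam d s).1 h; omega
  have himgQ : Disjoint (((P ∪ Qset lam d) \ X).image fun s => s - (lam : ℤ)) (Qset lam d) := by
    rw [Finset.disjoint_left]
    intro a ha haQ
    obtain ⟨s, hs, rfl⟩ := Finset.mem_image.1 ha
    have h1 := hub s hs
    have h2 := (mem_Qset lam d _).1 haQ
    omega
  have heq : (((P ∪ Qset lam d) \ X).image fun s => s - (lam : ℤ)) \ Qset lam d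
      = ((P ∪ Qset lam d) \ X).image fun s => s - (lam : ℤ) :=
    Finset.sdiff_eq_self_of_disjoint himgQ
  rw [heq]
  refine ⟨?_, hIcard⟩
  intro t ht
  obtain ⟨s, hs, rfl⟩ := Finset.mem_image.1 ht
  have h1 := hub s hs
  have h2 := hrem s hs
  rw [Qcast] at h2
  exact Finset.mem_Icc.2 ⟨by omega, by omega⟩

lemma Wcard (m lam d : ℕ) (hlam : 0 < lam) (π : Fin (m * lam) → Fin m)
    (hfp : isFreqPerm m lam π)
    (hd : ∀ i, Nat.dist (π i).val (i.val / lam) ≤ d) :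
    ∀ j, j ≤ m → (Wmap m lam d π j).card = d * lam := by
  intro j
  induction j with
  | zero => intro _; rw [W0 m lam d π, Int.card_Icc]; omega
  | succ j ih =>
    intro hj
    exact (hedge_card m lam d hlam _ _ (edge_forward m lam d hlam π hfp hd j (by omega))
      (Finset.filter_subset _ _) (ih (by omega))).2

lemma Winj (m lam d : ℕ) (hlam : 0 < lam) (π π' : Fin (m * lam) → Fin m)
    (hd : ∀ i, Nat.dist (π i).val (i.val / lam) ≤ d)
    (hd' : ∀ i, Nat.dist (π' i).val (i.val / lam) ≤ d)
    (h : ∀ j, j ≤ m → Wmap m lam d π j = Wmap m lam d π' j) : π = π' := by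
  have key : ∀ (ρ ρ' : Fin (m * lam) → Fin m),
      (∀ i, Nat.dist (ρ i).val (i.val / lam) ≤ d) →
      (∀ i, Nat.dist (ρ' i).val (i.val / lam) ≤ d) →
      (∀ j, j ≤ m → Wmap m lam d ρ j = Wmap m lam d ρ' j) →
      ∀ i : Fin (m * lam), (ρ i).val < (ρ' i).val → False := by
    intro ρ ρ' hdρ hdρ' hW i hlt
    have h0 : (0:ℤ) ≤ (i:ℤ) ∧ ((i:ℤ)) < ((m * lam : ℕ) : ℤ) := by
      constructor <;> [positivity; exact_mod_cast i.isLt]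
    obtain ⟨q, hq1, hq2, hq3, hq4, hq5, -, -⟩ := pval_spec m lam d hlam ρ hdρ h0.1 h0.2
    obtain ⟨q', hq1', hq2', hq3', hq4', hq5', -, -⟩ := pval_spec m lam d hlam ρ' hdρ' h0.1 h0.2
    rw [pval_fin] at hq3 hq4 hq5
    rw [pval_fin] at hq3' hq4' hq5'
    have hja : (ρ i).val + 1 ≤ (ρ' i).val := hlt
    have hjm : (ρ i).val + 1 ≤ m := by omega
    have hA1 : ((ρ i).val + 1) * lam = (ρ i).val * lam + lam := by ring
    have haa' : ((ρ i).val + 1) * lam ≤ (ρ' i).val * lam := Nat.mul_le_mul_right _ hja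
    have harg : (i:ℤ) + 1 - ((((ρ i).val + 1) * lam : ℕ) : ℤ) - 1
        + ((((ρ i).val + 1) * lam : ℕ) : ℤ) = (i:ℤ) := by ring
    have hsmem : (i:ℤ) + 1 - ((((ρ i).val + 1) * lam : ℕ) : ℤ) ∈
        Wmap m lam d ρ' ((ρ i).val + 1) := by
      refine Finset.mem_filter.2 ⟨Finset.mem_Icc.2 ⟨by omega, by omega⟩, ?_⟩
      rw [Wcond, harg]
      refine Or.inr ⟨h0.1, h0.2, ?_⟩
      rw [pval_fin]
      exact_mod_cast hja
    have hsnmem : (i:ℤ) + 1 - ((((ρ i).val + 1) * lam : ℕ) : ℤ) ∉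
        Wmap m lam d ρ ((ρ i).val + 1) := by
      intro hmem
      obtain ⟨-, hcond⟩ := Finset.mem_filter.1 hmem
      rw [Wcond, harg] at hcond
      rcases hcond with hph | ⟨-, -, hle⟩
      · omega
      · rw [pval_fin] at hle
        omega
    rw [hW ((ρ i).val + 1) hjm] at hsnmem
    exact hsnmem hsmem
  funext i
  rcases lt_trichotomy (π i).val (π' i).val with hc | hc | hc
  · exact absurd (key π π' hd hd' h i hc) (fun x => x)
  · exact Fin.ext hc
  · exact absurd (key π' π hd' hd (fun j hj => (h j hj).symm) i hc) (fun x => x)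


-- ===================== Backward direction =====================

/-- coordinate of position `i` at step `k` -/
def coord (lam : ℕ) (i : ℕ) (k : ℕ) : ℤ := (i : ℤ) + 1 - ((k * lam : ℕ) : ℤ)

/-- removal predicate -/
def RemP (lam d : ℕ) (u : ℕ → Finset ℤ) (k i : ℕ) : Prop :=
  coord lam i k ∈ u k ∪ Qset lam d ∧ coord lam i (k+1) ∉ u (k+1)

/-- removed set at step k -/
noncomputable def Yk (lam d : ℕ) (u : ℕ → Finset ℤ) (k : ℕ) : Finset ℤ :=
  (u k ∪ Qset lam d).filter fun s => s - (lam : ℤ) ∉ u (k+1)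

section Back
variable (m lam d : ℕ) (hlam : 0 < lam) (u : ℕ → Finset ℤ)
  (hu0 : u 0 = Finset.Icc 1 ((d * lam : ℕ) : ℤ))
  (hum : u m = Finset.Icc 1 ((d * lam : ℕ) : ℤ))
  (hv : ∀ k, k ≤ m → u k ⊆ Finset.Icc (-((d * lam : ℕ) : ℤ) + 1) ((d * lam : ℕ) : ℤ))
  (he : ∀ k, k < m → Hedge lam d (u k) (u (k+1)))

lemma coord_succ (i k : ℕ) : coord lam i (k+1) = coord lam i k - lam := by
  rw [coord, coord]
  have : ((k+1) * lam : ℕ) = k * lam + lam := by ring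
  rw [this]; push_cast; ring

include hv in
lemma ubound {k : ℕ} (hk : k ≤ m) {s : ℤ} (hs : s ∈ u k ∪ Qset lam d) :
    -((d * lam : ℕ) : ℤ) + 1 ≤ s ∧ s ≤ ((d * lam : ℕ) : ℤ) + lam := by
  rcases Finset.mem_union.1 hs with h | h
  · have := Finset.mem_Icc.1 (hv k hk h); omega
  · have := (mem_Qset lam d s).1 h; omega

include hv he in
lemma Yk_eq {k : ℕ} (hk : k < m) :
    ∀ X ⊆ u k ∪ Qset lam d, X.card = lam →
    (∀ s ∈ (u k ∪ Qset lam d) \ X, -((d : ℤ) * lam) + lam < s) →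
    u (k+1) = (((u k ∪ Qset lam d) \ X).image fun s => s - (lam : ℤ)) \ Qset lam d →
    X = Yk lam d u k := by
  intro X hXsub hXcard hrem heq
  ext s
  simp only [Yk, Finset.mem_filter]
  constructor
  · intro hsX
    refine ⟨hXsub hsX, fun hmem => ?_⟩
    rw [heq] at hmem
    obtain ⟨t, ht, hts⟩ := Finset.mem_image.1 (Finset.mem_sdiff.1 hmem).1
    have : t = s := by omega
    subst this
    exact (Finset.mem_sdiff.1 ht).2 hsX
  · rintro ⟨hsu, hnot⟩
    by_contra hsX
    have hmem : s - (lam:ℤ) ∈ u (k+1) := by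
      rw [heq]
      refine Finset.mem_sdiff.2 ⟨Finset.mem_image.2 ⟨s, Finset.mem_sdiff.2 ⟨hsu, hsX⟩, rfl⟩, ?_⟩
      intro hQ
      have h1 := (mem_Qset lam d _).1 hQ
      have h2 := (ubound m lam d u hv (le_of_lt hk) hsu).2
      omega
    exact hnot hmem

include hv he in
lemma card_Yk {k : ℕ} (hk : k < m) : (Yk lam d u k).card = lam := by
  obtain ⟨X, hXsub, hXcard, hrem, heq⟩ := he k hk
  rw [← Yk_eq m lam d u hv he hk X hXsub hXcard hrem heq]
  exact hXcard

include hv he in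
lemma mem_next {k : ℕ} (hk : k < m) {s : ℤ} (hs : s ∈ u (k+1)) :
    s + lam ∈ u k ∪ Qset lam d := by
  obtain ⟨X, hXsub, hXcard, hrem, heq⟩ := he k hk
  rw [heq] at hs
  obtain ⟨t, ht, hts⟩ := Finset.mem_image.1 (Finset.mem_sdiff.1 hs).1
  have : t = s + lam := by omega
  subst this
  exact (Finset.mem_sdiff.1 ht).1

include hv he in
lemma rem_bound' {k : ℕ} (hk : k < m) {s : ℤ} (hsu : s ∈ u k ∪ Qset lam d)
    (hs : s - lam ∈ u (k+1)) : -((d * lam : ℕ) : ℤ) + lam < s := by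
  obtain ⟨X, hXsub, hXcard, hrem, heq⟩ := he k hk
  have hX := Yk_eq m lam d u hv he hk X hXsub hXcard hrem heq
  have hsX : s ∉ X := by
    rw [hX]
    simp only [Yk, Finset.mem_filter]
    tauto
  have := hrem s (Finset.mem_sdiff.2 ⟨hsu, hsX⟩)
  rw [Qcast] at this
  omega

include hv he in
lemma next_mem {k : ℕ} (hk : k < m) {s : ℤ} (hsu : s ∈ u k ∪ Qset lam d)
    (hsY : s ∉ Yk lam d u k) : s - lam ∈ u (k+1) := by
  by_contra hc
  exact hsY (Finset.mem_filter.2 ⟨hsu, hc⟩)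

include hu0 hv he in
lemma u_pos : ∀ k, k ≤ m → ∀ s ∈ u k, 1 - ((k * lam : ℕ) : ℤ) ≤ s := by
  intro k
  induction k with
  | zero =>
    intro _ s hs
    rw [hu0] at hs
    have := Finset.mem_Icc.1 hs
    simp only [Nat.zero_mul, Nat.cast_zero]
    omega
  | succ k ih =>
    intro hk s hs
    have hkl : ((k+1) * lam : ℕ) = k * lam + lam := by ring
    have h1 := mem_next m lam d u hv he (by omega) hs
    rcases Finset.mem_union.1 h1 with h | h
    · have := ih (by omega) _ h
      omega
    · have := (mem_Qset lam d _).1 h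
      omega

end Back

/-- entry step of position i -/
def ks (lam d : ℕ) (i : ℕ) : ℕ := if i < d * lam then 0 else (i - d * lam) / lam

section Back2
variable (m lam d : ℕ) (hlam : 0 < lam) (u : ℕ → Finset ℤ)
  (hu0 : u 0 = Finset.Icc 1 ((d * lam : ℕ) : ℤ))
  (hum : u m = Finset.Icc 1 ((d * lam : ℕ) : ℤ))
  (hv : ∀ k, k ≤ m → u k ⊆ Finset.Icc (-((d * lam : ℕ) : ℤ) + 1) ((d * lam : ℕ) : ℤ))
  (he : ∀ k, k < m → Hedge lam d (u k) (u (k+1)))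

include hlam in
lemma ks_div_facts (i : ℕ) (hi : ¬ i < d * lam) :
    ((i - d * lam) / lam) * lam ≤ i - d * lam ∧
      i - d * lam < ((i - d * lam) / lam) * lam + lam := by
  set e := (i - d * lam) / lam with he
  have h2 : e * lam + (i - d * lam) % lam = i - d * lam := by
    rw [mul_comm]; exact Nat.div_add_mod _ _
  have h3 : (i - d * lam) % lam < lam := Nat.mod_lt _ hlam
  omega

include hlam hu0 in
lemma ks_mem (i : ℕ) : coord lam i (ks lam d i) ∈ u (ks lam d i) ∪ Qset lam d := by
  rw [ks]
  split_ifs with hi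
  · refine Finset.mem_union_left _ ?_
    rw [hu0, coord]
    simp only [Nat.zero_mul, Nat.cast_zero]
    exact Finset.mem_Icc.2 ⟨by omega, by omega⟩
  · refine Finset.mem_union_right _ ((mem_Qset lam d _).2 ?_)
    obtain ⟨ha, hb⟩ := ks_div_facts lam d hlam i hi
    rw [coord]
    constructor <;> omega

include hlam in
lemma ks_lt (i : ℕ) (hi : i < m * lam) : ks lam d i < m := by
  have hm : 0 < m := by
    rcases Nat.eq_zero_or_pos m with h | h
    · subst h; simp at hi
    · exact h
  rw [ks]
  split_ifs with hcase
  · exact hm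
  · obtain ⟨ha, hb⟩ := ks_div_facts lam d hlam i hcase
    by_contra hc
    have : m * lam ≤ ((i - d * lam) / lam) * lam := Nat.mul_le_mul_right _ (by omega)
    omega

include hlam in
lemma before_ks (i k : ℕ) (hk : k < ks lam d i) : ((d * lam : ℕ) : ℤ) < coord lam i k := by
  rw [ks] at hk
  split_ifs at hk with hcase
  · omega
  · obtain ⟨ha, hb⟩ := ks_div_facts lam d hlam i hcase
    have hmono : (k + 1) * lam ≤ ((i - d * lam) / lam) * lam := Nat.mul_le_mul_right _ hk
    have hkl : (k+1) * lam = k * lam + lam := by ring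
    rw [coord]
    omega

include hlam hu0 hum hv he in
lemma exists_rem (i : ℕ) (hi : i < m * lam) : ∃ k, k < m ∧ RemP lam d u k i := by
  by_contra hno
  push_neg at hno
  have chain : ∀ t, ks lam d i ≤ t → t ≤ m → coord lam i t ∈ u t ∪ Qset lam d := by
    intro t
    induction t with
    | zero => intro h1 _; have h : ks lam d i = 0 := by omega
              rw [← h]; exact ks_mem lam d hlam u hu0 i
    | succ t ih =>
      intro h1 h2
      rcases Nat.lt_or_ge t (ks lam d i) with hcase | hcase
      · have h : ks lam d i = t + 1 := by omega
        rw [← h]; exact ks_mem lam d hlam u hu0 i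
      · have hin := ih hcase (by omega)
        have htm : t < m := by omega
        by_cases hn : coord lam i (t+1) ∈ u (t+1)
        · exact Finset.mem_union_left _ hn
        · exact absurd ⟨hin, hn⟩ (hno t htm)
  have hksm : ks lam d i ≤ m := le_of_lt (ks_lt m lam d hlam i hi)
  have hfin := chain m hksm (le_refl m)
  rw [coord] at hfin
  rcases Finset.mem_union.1 hfin with h | h
  · rw [hum] at h
    have := Finset.mem_Icc.1 h
    omega
  · have := (mem_Qset lam d _).1 h
    omega

include hlam hv he in
lemma after_rem (i k : ℕ) (hk : k < m) (hrem : RemP lam d u k i) :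
    ∀ t, k < t → t ≤ m → coord lam i t ∉ u t ∧ coord lam i t ≤ ((d * lam : ℕ) : ℤ) := by
  intro t
  induction t with
  | zero => omega
  | succ t ih =>
    intro h1 h2
    rcases Nat.lt_or_ge k t with hcase | hcase
    · obtain ⟨hnot, hle⟩ := ih hcase (by omega)
      have hnotQ : coord lam i t ∉ Qset lam d := by
        intro hQ
        have := (mem_Qset lam d _).1 hQ
        omega
      have hnotU : coord lam i t ∉ u t ∪ Qset lam d := by
        intro hU
        rcases Finset.mem_union.1 hU with h | h
        · exact hnot h
        · exact hnotQ h
      constructor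
      · intro hmem
        have := mem_next m lam d u hv he (by omega) hmem
        rw [coord_succ] at this
        have harg : coord lam i t - (lam:ℤ) + lam = coord lam i t := by ring
        rw [harg] at this
        exact hnotU this
      · rw [coord_succ]; omega
    · have : t = k := by omega
      subst this
      refine ⟨hrem.2, ?_⟩
      have := ubound m lam d u hv (by omega) hrem.1
      rw [coord_succ]
      omega

include hlam hv he in
lemma rem_unique (i k k' : ℕ) (hk : k < m) (hk' : k' < m)
    (h1 : RemP lam d u k i) (h2 : RemP lam d u k' i) : k = k' := by
  by_contra hne
  rcases Nat.lt_or_ge k k' with hc | hc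
  · have := (after_rem m lam d hlam u hv he i k hk h1 k' hc (by omega)).1
    have hQ := (after_rem m lam d hlam u hv he i k hk h1 k' hc (by omega)).2
    rcases Finset.mem_union.1 h2.1 with h | h
    · exact this h
    · have := (mem_Qset lam d _).1 h; omega
  · have hc' : k' < k := by omega
    have := (after_rem m lam d hlam u hv he i k' hk' h2 k hc' (by omega)).1
    have hQ := (after_rem m lam d hlam u hv he i k' hk' h2 k hc' (by omega)).2
    rcases Finset.mem_union.1 h1.1 with h | h
    · exact this h
    · have := (mem_Qset lam d _).1 h; omega

include hlam hv in
lemma rem_dist (i k : ℕ) (hk : k < m) (hi : i < m * lam) (hrem : RemP lam d u k i) :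
    Nat.dist k (i / lam) ≤ d := by
  have hb := ubound m lam d u hv (le_of_lt hk) hrem.1
  simp only [coord] at hb
  set q := i / lam with hq
  have h2 : q * lam + i % lam = i := by rw [mul_comm]; exact Nat.div_add_mod _ _
  have h3 : i % lam < lam := Nat.mod_lt _ hlam
  have hqk : q ≤ k + d := by
    by_contra hc
    have : (k + d + 1) * lam ≤ q * lam := Nat.mul_le_mul_right _ (by omega)
    have hh : (k + d + 1) * lam = k * lam + d * lam + lam := by ring
    omega
  have hkq : k ≤ q + d := by
    by_contra hc
    have : (q + d + 1) * lam ≤ k * lam := Nat.mul_le_mul_right _ (by omega)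
    have hh : (q + d + 1) * lam = q * lam + d * lam + lam := by ring
    omega
  simp only [Nat.dist]
  omega

end Back2

section Back3
variable (m lam d : ℕ) (hlam : 0 < lam) (u : ℕ → Finset ℤ)
  (hu0 : u 0 = Finset.Icc 1 ((d * lam : ℕ) : ℤ))
  (hum : u m = Finset.Icc 1 ((d * lam : ℕ) : ℤ))
  (hv : ∀ k, k ≤ m → u k ⊆ Finset.Icc (-((d * lam : ℕ) : ℤ) + 1) ((d * lam : ℕ) : ℤ))
  (he : ∀ k, k < m → Hedge lam d (u k) (u (k+1)))
  (π : Fin (m * lam) → Fin m)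
  (hπ : ∀ i : Fin (m * lam), RemP lam d u (π i).val i.val)

include hπ in
lemma fiber_maps {k : ℕ} (hk : k < m) (i : Fin (m * lam)) (hik : (π i).val = k) :
    coord lam i.val k ∈ Yk lam d u k := by
  have h := hπ i
  rw [hik] at h
  refine Finset.mem_filter.2 ⟨h.1, ?_⟩
  have h2 := h.2
  rw [coord_succ] at h2
  exact h2

include hπ in
lemma fiber_card_le {k : ℕ} (hk : k < m) :
    (Finset.univ.filter fun i : Fin (m * lam) => (π i).val = k).card ≤ (Yk lam d u k).card := by
  apply Finset.card_le_card_of_injOn (fun i => coord lam i.val k)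
  · intro i hi
    exact fiber_maps m lam d u π hπ hk i (Finset.mem_filter.1 hi).2
  · intro a _ b _ hab
    simp only [coord] at hab
    exact Fin.ext (by omega)

include hlam hv he hπ in
lemma fiber_card_eq {k : ℕ} (hk : k < m) :
    (Finset.univ.filter fun i : Fin (m * lam) => (π i).val = k).card = lam := by
  have hle : ∀ j ∈ Finset.range m,
      (Finset.univ.filter fun i : Fin (m * lam) => (π i).val = j).card ≤ lam := by
    intro j hj
    calc _ ≤ (Yk lam d u j).card :=
          fiber_card_le m lam d u π hπ (Finset.mem_range.1 hj)
    _ = lam := card_Yk m lam d u hv he (Finset.mem_range.1 hj)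
  have hsum : ∑ j ∈ Finset.range m,
      (Finset.univ.filter fun i : Fin (m * lam) => (π i).val = j).card = m * lam := by
    rw [← Finset.card_eq_sum_card_fiberwise (fun i _ => Finset.mem_range.2 (π i).isLt)]
    simp
  by_contra hne
  have hlt : (Finset.univ.filter fun i : Fin (m * lam) => (π i).val = k).card < lam := by
    have := hle k (Finset.mem_range.2 hk); omega
  have : ∑ j ∈ Finset.range m,
      (Finset.univ.filter fun i : Fin (m * lam) => (π i).val = j).card
      < ∑ _j ∈ Finset.range m, lam :=
    Finset.sum_lt_sum hle ⟨k, Finset.mem_range.2 hk, hlt⟩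
  simp only [Finset.sum_const, Finset.card_range, smul_eq_mul] at this
  omega

include hlam hv he hπ in
lemma freq_back : isFreqPerm m lam π := by
  intro kf
  have h2 : (Finset.univ.filter fun i => π i = kf)
      = (Finset.univ.filter fun i : Fin (m * lam) => (π i).val = kf.val) := by
    ext i; simp [Fin.ext_iff]
  rw [h2]
  exact fiber_card_eq m lam d hlam u hv he π hπ kf.isLt

include hlam hv he hπ in
lemma Yk_real {k : ℕ} (hk : k < m) (s : ℤ) (hs : s ∈ Yk lam d u k) :
    ∃ i : Fin (m * lam), (π i).val = k ∧ coord lam i.val k = s := by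
  set A := Finset.univ.filter fun i : Fin (m * lam) => (π i).val = k with hA
  have himg : A.image (fun i => coord lam i.val k) ⊆ Yk lam d u k := by
    intro t ht
    obtain ⟨i, hi, rfl⟩ := Finset.mem_image.1 ht
    exact fiber_maps m lam d u π hπ hk i (Finset.mem_filter.1 hi).2
  have hcard : (A.image (fun i => coord lam i.val k)).card = (Yk lam d u k).card := by
    rw [Finset.card_image_of_injOn (fun a _ b _ hab => by
      simp only [coord] at hab; exact Fin.ext (by omega))]
    rw [card_Yk m lam d u hv he hk]
    exact fiber_card_eq m lam d hlam u hv he π hπ hk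
  have heq : A.image (fun i => coord lam i.val k) = Yk lam d u k :=
    Finset.eq_of_subset_of_card_le himg (le_of_eq hcard.symm)
  rw [← heq] at hs
  obtain ⟨i, hi, hcoord⟩ := Finset.mem_image.1 hs
  exact ⟨i, (Finset.mem_filter.1 hi).2, hcoord⟩

include hlam hu0 hv he hπ in
lemma chain_phantom (i : ℕ) (hph : m * lam ≤ i) :
    ∀ t, ks lam d i ≤ t → t ≤ m → coord lam i t ∈ u t ∪ Qset lam d := by
  intro t
  induction t with
  | zero => intro h1 _; have h : ks lam d i = 0 := by omega
            rw [← h]; exact ks_mem lam d hlam u hu0 i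
  | succ t ih =>
    intro h1 h2
    rcases Nat.lt_or_ge t (ks lam d i) with hcase | hcase
    · have h : ks lam d i = t + 1 := by omega
      rw [← h]; exact ks_mem lam d hlam u hu0 i
    · have hin := ih hcase (by omega)
      have hY : coord lam i t ∉ Yk lam d u t := by
        intro hY
        obtain ⟨i', -, hco⟩ := Yk_real m lam d hlam u hv he π hπ (by omega : t < m) _ hY
        simp only [coord] at hco
        have hii : i'.val = i := by omega
        have := i'.isLt
        omega
      have := next_mem m lam d u hv he (by omega : t < m) hin hY
      rw [coord_succ]
      exact Finset.mem_union_left _ this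

include hlam hu0 hv he hπ in
lemma chain_real (i : Fin (m * lam)) :
    ∀ t, ks lam d i.val ≤ t → t ≤ (π i).val → coord lam i.val t ∈ u t ∪ Qset lam d := by
  intro t
  induction t with
  | zero => intro h1 _; have h : ks lam d i.val = 0 := by omega
            rw [← h]; exact ks_mem lam d hlam u hu0 i.val
  | succ t ih =>
    intro h1 h2
    rcases Nat.lt_or_ge t (ks lam d i.val) with hcase | hcase
    · have h : ks lam d i.val = t + 1 := by omega
      rw [← h]; exact ks_mem lam d hlam u hu0 i.val
    · have hin := ih hcase (by omega)
      have htm : t < m := by have := (π i).isLt; omega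
      by_cases hn : coord lam i.val (t+1) ∈ u (t+1)
      · exact Finset.mem_union_left _ hn
      · exfalso
        have hRem : RemP lam d u t i.val := ⟨hin, hn⟩
        have := rem_unique m lam d hlam u hv he i.val t (π i).val htm (π i).isLt hRem (hπ i)
        omega

include hlam hu0 hv he hπ in
lemma Wmap_eq_u : ∀ k, k ≤ m → Wmap m lam d π k = u k := by
  intro k hk
  ext s
  constructor
  · intro hs
    obtain ⟨hicc, hcond⟩ := Finset.mem_filter.1 hs
    rw [Finset.mem_Icc] at hicc
    rw [Wcond] at hcond
    have h0 : 0 ≤ s - 1 + ((k * lam : ℕ) : ℤ) := by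
      rcases hcond with h | h
      · omega
      · exact h.1
    set iN := (s - 1 + ((k * lam : ℕ) : ℤ)).toNat with hiN
    have hsc : s = coord lam iN k := by rw [coord]; omega
    have hks : ks lam d iN ≤ k := by
      by_contra hc
      have := before_ks lam d hlam iN k (by omega)
      omega
    rcases hcond with hph | ⟨h0', h1', h2'⟩
    · have hmem := chain_phantom m lam d hlam u hu0 hv he π hπ iN (by omega) k hks hk
      rw [← hsc] at hmem
      rcases Finset.mem_union.1 hmem with h | h
      · exact h
      · have := (mem_Qset lam d _).1 h; omega
    · have hiNlt : iN < m * lam := by omega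
      have hival : ((⟨iN, hiNlt⟩ : Fin (m * lam)) : ℤ) = s - 1 + ((k * lam : ℕ) : ℤ) := by
        simp only [Fin.val]; omega
      have hpv : pval m lam π (s - 1 + ((k * lam : ℕ) : ℤ))
          = (π ⟨iN, hiNlt⟩).val := by
        rw [← hival, pval_fin]
      rw [hpv] at h2'
      have hkr : k ≤ (π ⟨iN, hiNlt⟩).val := by exact_mod_cast h2'
      have hmem : s ∈ u k ∪ Qset lam d := by
        rw [hsc]
        exact chain_real m lam d hlam u hu0 hv he π hπ ⟨iN, hiNlt⟩ k hks hkr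
      rcases Finset.mem_union.1 hmem with h | h
      · exact h
      · have := (mem_Qset lam d _).1 h; omega
  · intro hs
    have hicc := Finset.mem_Icc.1 (hv k hk hs)
    have hpos := u_pos m lam d u hu0 hv he k hk s hs
    have h0 : 0 ≤ s - 1 + ((k * lam : ℕ) : ℤ) := by omega
    set iN := (s - 1 + ((k * lam : ℕ) : ℤ)).toNat with hiN
    have hsc : s = coord lam iN k := by rw [coord]; omega
    refine Finset.mem_filter.2 ⟨Finset.mem_Icc.2 hicc, ?_⟩
    rw [Wcond]
    by_cases hreal : s - 1 + ((k * lam : ℕ) : ℤ) < ((m * lam : ℕ) : ℤ)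
    · have hiNlt : iN < m * lam := by omega
      have hival : ((⟨iN, hiNlt⟩ : Fin (m * lam)) : ℤ) = s - 1 + ((k * lam : ℕ) : ℤ) := by
        simp only [Fin.val]; omega
      have hkr : k ≤ (π ⟨iN, hiNlt⟩).val := by
        by_contra hc
        have hfa := (after_rem m lam d hlam u hv he iN (π ⟨iN, hiNlt⟩).val
          (π ⟨iN, hiNlt⟩).isLt (hπ ⟨iN, hiNlt⟩) k (by omega) hk).1
        rw [← hsc] at hfa
        exact hfa hs
      refine Or.inr ⟨h0, hreal, ?_⟩
      have hpv : pval m lam π (s - 1 + ((k * lam : ℕ) : ℤ))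
          = (π ⟨iN, hiNlt⟩).val := by
        rw [← hival, pval_fin]
      rw [hpv]
      exact_mod_cast hkr
    · exact Or.inl (by omega)

end Back3

lemma backward_full (m lam d : ℕ) (hlam : 0 < lam) (u : ℕ → Finset ℤ)
    (hu0 : u 0 = Finset.Icc 1 ((d * lam : ℕ) : ℤ))
    (hum : u m = Finset.Icc 1 ((d * lam : ℕ) : ℤ))
    (hv : ∀ k, k ≤ m → u k ⊆ Finset.Icc (-((d * lam : ℕ) : ℤ) + 1) ((d * lam : ℕ) : ℤ))
    (he : ∀ k, k < m → Hedge lam d (u k) (u (k+1))) :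
    ∃ π : Fin (m * lam) → Fin m, isFreqPerm m lam π ∧
    (∀ i, Nat.dist (π i).val (i.val / lam) ≤ d) ∧
    ∀ k, k ≤ m → Wmap m lam d π k = u k := by
  have hex : ∀ i : Fin (m * lam), ∃ k, k < m ∧ RemP lam d u k i.val := fun i =>
    exists_rem m lam d hlam u hu0 hum hv he i.val i.isLt
  choose f hf1 hf2 using hex
  refine ⟨fun i => ⟨f i, hf1 i⟩, ?_, ?_, ?_⟩
  · exact freq_back m lam d hlam u hv he _ hf2
  · intro i
    exact rem_dist m lam d hlam u hv i.val (f i) (hf1 i) i.isLt (hf2 i)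
  · exact Wmap_eq_u m lam d hlam u hu0 hv he _ hf2

lemma mem_ball_iff (m lam d : ℕ) (π : Fin (m * lam) → Fin m) :
    π ∈ ball m lam d (ident m lam) ↔
      isFreqPerm m lam π ∧ ∀ i : Fin (m * lam), Nat.dist (π i).val (i.val / lam) ≤ d := by
  simp [ball, FPset, cheb, ident, Finset.sup_le_iff]

end VWaux

open VWaux in
theorem Vinf_eq_numWalks (m lam d : ℕ) (hlam : 0 < lam) :
    Vinf m lam d = Set.ncard {w : Fin (m + 1) → Finset ℤ |
      w 0 = Finset.Icc (1 : ℤ) (d * lam) ∧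
      w (Fin.last m) = Finset.Icc (1 : ℤ) (d * lam) ∧
      (∀ j : Fin (m + 1), Hvert lam d (w j)) ∧
      ∀ j : Fin m, Hedge lam d (w j.castSucc) (w j.succ)} := by
  classical
  have hset : {w : Fin (m + 1) → Finset ℤ |
      w 0 = Finset.Icc (1 : ℤ) (d * lam) ∧
      w (Fin.last m) = Finset.Icc (1 : ℤ) (d * lam) ∧
      (∀ j : Fin (m + 1), Hvert lam d (w j)) ∧
      ∀ j : Fin m, Hedge lam d (w j.castSucc) (w j.succ)} =
      (fun (π : Fin (m * lam) → Fin m) (j : Fin (m + 1)) => Wmap m lam d π j.val) ''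
        ↑(ball m lam d (ident m lam)) := by
    ext w
    constructor
    · rintro ⟨hw0, hwm, hwv, hwe⟩
      set u : ℕ → Finset ℤ := fun k => w ⟨min k m, by omega⟩ with hu
      have hindex : ∀ k, (hk : k ≤ m) → u k = w ⟨k, by omega⟩ := by
        intro k hk
        simp only [hu]
        congr 1
        exact Fin.ext (by simp [Nat.min_eq_left hk])
      have hu0 : u 0 = Finset.Icc 1 ((d * lam : ℕ) : ℤ) := by
        rw [hindex 0 (by omega)]
        have h : (⟨0, by omega⟩ : Fin (m + 1)) = 0 := rfl
        rw [h, hw0, Qcast]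
      have hum : u m = Finset.Icc 1 ((d * lam : ℕ) : ℤ) := by
        rw [hindex m (le_refl m)]
        have h : (⟨m, by omega⟩ : Fin (m + 1)) = Fin.last m := rfl
        rw [h, hwm, Qcast]
      have hv : ∀ k, k ≤ m → u k ⊆ Finset.Icc (-((d * lam : ℕ) : ℤ) + 1) ((d * lam : ℕ) : ℤ) := by
        intro k hk
        rw [hindex k hk, ← Qcast]
        exact (hwv _).1
      have he : ∀ k, k < m → Hedge lam d (u k) (u (k+1)) := by
        intro k hk
        have h1 : u k = w ((⟨k, hk⟩ : Fin m).castSucc) := by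
          rw [hindex k (by omega)]
          exact congrArg w (Fin.ext rfl)
        have h2 : u (k+1) = w ((⟨k, hk⟩ : Fin m).succ) := by
          rw [hindex (k+1) (by omega)]
          exact congrArg w (Fin.ext rfl)
        rw [h1, h2]
        exact hwe ⟨k, hk⟩
      obtain ⟨π, hfp, hd, hWu⟩ := backward_full m lam d hlam u hu0 hum hv he
      refine ⟨π, (mem_ball_iff m lam d π).2 ⟨hfp, hd⟩, ?_⟩
      funext j
      have hjm : j.val ≤ m := by omega
      show Wmap m lam d π j.val = w j
      rw [hWu j.val hjm, hindex j.val hjm]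
    · rintro ⟨π, hπ, rfl⟩
      obtain ⟨hfp, hd⟩ := (mem_ball_iff m lam d π).1 hπ
      refine ⟨?_, ?_, ?_, ?_⟩
      · show Wmap m lam d π (0 : Fin (m+1)).val = _
        have h : (0 : Fin (m+1)).val = 0 := rfl
        rw [h, W0 m lam d π, Qcast]
      · show Wmap m lam d π (Fin.last m).val = _
        rw [Fin.val_last, Wm m lam d hlam π hd, Qcast]
      · intro j
        constructor
        · show Wmap m lam d π j.val ⊆ _
          rw [Qcast]
          exact Finset.filter_subset _ _
        · show (Wmap m lam d π j.val).card = d * lam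
          exact Wcard m lam d hlam π hfp hd j.val (by omega)
      · intro j
        show Hedge lam d (Wmap m lam d π (j.castSucc).val) (Wmap m lam d π (j.succ).val)
        have h1 : (j.castSucc : Fin (m+1)).val = j.val := rfl
        have h2 : (j.succ : Fin (m+1)).val = j.val + 1 := rfl
        rw [h1, h2]
        exact edge_forward m lam d hlam π hfp hd j.val j.isLt
  rw [Vinf, hset, Set.ncard_image_of_injOn, Set.ncard_coe_finset]
  intro π hπ π' hπ' heq
  obtain ⟨-, hd⟩ := (VWaux.mem_ball_iff m lam d π).1 hπ
  obtain ⟨-, hd'⟩ := (VWaux.mem_ball_iff m lam d π').1 hπ'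
  refine VWaux.Winj m lam d hlam π π' hd hd' ?_
  intro j hj
  exact congrFun heq ⟨j, by omega⟩
end

section
/- For fixed λ and d, the sequence a_m = V_∞(λ, λm, d) satisfies a linear recurrence with constant integer coefficients of order at most C(2dλ, dλ), namely the recurrence whose characteristic polynomial is the characteristic polynomial of the adjacency matrix A_H of H_{λ,d}. -/
open scoped Classical

/-- Integer adjacency matrix of `H_{λ,d}` (entries count the valid subsets `X`). -/
noncomputable def AHZ (lam d : ℕ) :
    Matrix {P // P ∈ verts lam d} {P // P ∈ verts lam d} ℤ :=
  fun P P' =>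
    (((P.val ∪ Qset lam d).powerset.filter fun X => X.card = lam ∧
      (∀ s ∈ (P.val ∪ Qset lam d) \ X, -(d * lam : ℤ) + lam < s) ∧
      P'.val = (((P.val ∪ Qset lam d) \ X).image fun s => s - (lam : ℤ)) \ Qset lam d).card : ℤ)

namespace VLR

/-- window -/
noncomputable def W (lam d : ℕ) : Finset ℤ := Finset.Icc (-(d * lam : ℤ) + 1) (d * lam)

/-- start/end vertex -/
noncomputable def vtx (lam d : ℕ) : Finset ℤ := Finset.Icc 1 (d * lam : ℤ)

/-- shifted coordinate of position `i` at time `t` -/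
def sh (lam t : ℕ) {n : ℕ} (i : Fin n) : ℤ := (i : ℤ) + 1 - (t : ℤ) * lam

def isfree (lam d t : ℕ) (P : Finset ℤ) {n : ℕ} (i : Fin n) : Prop :=
  sh lam t i ∈ P ∨ (d * lam : ℤ) < sh lam t i

def fill (m lam t : ℕ) (i : Fin (m * lam)) : Fin m :=
  ⟨min (i.val / lam) (t - 1),
    lt_of_le_of_lt (min_le_left _ _)
      (Nat.div_lt_of_lt_mul (lt_of_lt_of_eq i.isLt (Nat.mul_comm m lam)))⟩

def cond (m lam d t : ℕ) (P : Finset ℤ) (f : Fin (m * lam) → Fin m) : Prop :=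
  (∀ i, (isfree lam d t P i ↔ t ≤ (f i).val) ∧ (¬ isfree lam d t P i → f i = fill m lam t i)) ∧
  (∀ k : Fin m, t ≤ k.val → (Finset.univ.filter (fun i => f i = k)).card = lam) ∧
  (∀ i, t ≤ (f i).val →
    (((f i).val : ℤ) - d) * lam ≤ (i : ℤ) ∧ (i : ℤ) < (((f i).val : ℤ) + d + 1) * lam) ∧
  (∀ s : ℤ, -(d * lam : ℤ) + 1 ≤ s → s ≤ (d * lam : ℤ) → (m * lam : ℤ) < s + t * lam → s ∈ P)

noncomputable def Nset (m lam d t : ℕ) (P : Finset ℤ) : Finset (Fin (m * lam) → Fin m) :=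
  Finset.univ.filter (cond m lam d t P)

/-- valid `X`s at a vertex -/
noncomputable def XS (lam d : ℕ) (P : Finset ℤ) : Finset (Finset ℤ) :=
  (P ∪ Qset lam d).powerset.filter fun X => X.card = lam ∧
    ∀ s ∈ (P ∪ Qset lam d) \ X, -(d * lam : ℤ) + lam < s

noncomputable def nxt (lam d : ℕ) (P X : Finset ℤ) : Finset ℤ :=
  (((P ∪ Qset lam d) \ X).image fun s => s - (lam : ℤ)) \ Qset lam d

def Xof (m lam t : ℕ) (f : Fin (m * lam) → Fin m) : Finset ℤ :=
  (Finset.univ.filter (fun i => (f i).val = t)).image (sh lam t)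

noncomputable def aent (lam d : ℕ) (P P' : Finset ℤ) : ℕ :=
  ((XS lam d P).filter (fun X => P' = nxt lam d P X)).card

-- basic membership lemmas
lemma mem_W {lam d : ℕ} {x : ℤ} : x ∈ W lam d ↔ -(d * lam : ℤ) + 1 ≤ x ∧ x ≤ (d * lam : ℤ) := by
  simp [W, Finset.mem_Icc]

lemma mem_Q {lam d : ℕ} {x : ℤ} :
    x ∈ Qset lam d ↔ (d * lam : ℤ) + 1 ≤ x ∧ x ≤ (d * lam : ℤ) + lam := by
  simp [Qset, Finset.mem_Icc]

lemma mem_vtx {lam d : ℕ} {x : ℤ} : x ∈ vtx lam d ↔ 1 ≤ x ∧ x ≤ (d * lam : ℤ) := by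
  simp [vtx, Finset.mem_Icc]

lemma mem_verts {lam d : ℕ} {P : Finset ℤ} :
    P ∈ verts lam d ↔ P ⊆ W lam d ∧ P.card = d * lam := by
  simp [verts, W, Finset.mem_filter, Finset.mem_powerset]

lemma card_vtx (lam d : ℕ) : (vtx lam d).card = d * lam := by
  rw [vtx, Int.card_Icc]
  have : (d * lam : ℤ) + 1 - 1 = ((d * lam : ℕ) : ℤ) := by push_cast; ring
  rw [this, Int.toNat_natCast]

lemma vtx_mem_verts (lam d : ℕ) : vtx lam d ∈ verts lam d := by
  rw [mem_verts]
  refine ⟨fun x hx => ?_, card_vtx lam d⟩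
  rw [mem_vtx] at hx; rw [mem_W]
  constructor <;> [nlinarith [hx.1, hx.2]; exact hx.2]

lemma card_W (lam d : ℕ) : (W lam d).card = 2 * d * lam := by
  rw [W, Int.card_Icc]
  have : (d * lam : ℤ) + 1 - (-(d * lam : ℤ) + 1) = ((2 * d * lam : ℕ) : ℤ) := by push_cast; ring
  rw [this, Int.toNat_natCast]

lemma mem_Nset {m lam d t : ℕ} {P : Finset ℤ} {f : Fin (m * lam) → Fin m} :
    f ∈ Nset m lam d t P ↔ cond m lam d t P f := by
  simp [Nset]

lemma sh_succ {lam t n : ℕ} (i : Fin n) : sh lam (t + 1) i = sh lam t i - lam := by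
  simp only [sh]; push_cast; ring

lemma sh_inj {lam t n : ℕ} {i j : Fin n} (h : sh lam t i = sh lam t j) : i = j := by
  simp only [sh] at h
  have : (i : ℤ) = (j : ℤ) := by omega
  exact Fin.ext (by exact_mod_cast this)

end VLR

namespace VLR2
open VLR

lemma nat_dist_le (a b d : ℕ) : Nat.dist a b ≤ d ↔ a ≤ b + d ∧ b ≤ a + d := by
  simp [Nat.dist]; omega

lemma dist_iff {m lam : ℕ} (d : ℕ) (hlam : 0 < lam) (i : Fin (m * lam)) (a : ℕ) :
    Nat.dist a (i.val / lam) ≤ d ↔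
      ((a : ℤ) - d) * lam ≤ (i : ℤ) ∧ (i : ℤ) < ((a : ℤ) + d + 1) * lam := by
  have h1 : i.val / lam ≤ a + d ↔ (i : ℤ) < ((a : ℤ) + d + 1) * lam := by
    rw [← Nat.lt_succ_iff, Nat.div_lt_iff_lt_mul hlam]
    rw [show ((a : ℤ) + d + 1) * lam = (((a + d + 1) * lam : ℕ) : ℤ) by push_cast; ring]
    exact_mod_cast Iff.rfl
  have h2 : a ≤ i.val / lam + d ↔ ((a : ℤ) - d) * lam ≤ (i : ℤ) := by
    rcases le_or_gt a d with h | h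
    · refine iff_of_true (h.trans (Nat.le_add_left _ _)) ?_
      have : ((a : ℤ) - d) ≤ 0 := by
        have : (a : ℤ) ≤ d := by exact_mod_cast h
        linarith
      have := mul_nonpos_of_nonpos_of_nonneg this (by positivity : (0:ℤ) ≤ (lam : ℤ))
      have hi : (0 : ℤ) ≤ (i : ℤ) := by positivity
      linarith
    · have hcast : ((a : ℤ) - d) * lam = (((a - d) * lam : ℕ) : ℤ) := by
        push_cast [Nat.cast_sub h.le]; ring
      rw [hcast]
      have hiff : a ≤ i.val / lam + d ↔ a - d ≤ i.val / lam := by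
        constructor
        · intro hh; exact Nat.sub_le_of_le_add (by omega)
        · intro hh; omega
      rw [hiff, Nat.le_div_iff_mul_le hlam]
      exact_mod_cast Iff.rfl
  rw [nat_dist_le, h2, h1]

lemma cheb_ident_le {m lam : ℕ} (d : ℕ) (f : Fin (m * lam) → Fin m) :
    cheb f (ident m lam) ≤ d ↔ ∀ i, Nat.dist (f i).val (i.val / lam) ≤ d := by
  simp [cheb, Finset.sup_le_iff, ident]

lemma ball_eq {m lam d : ℕ} (hlam : 0 < lam) :
    ball m lam d (ident m lam) = Nset m lam d 0 (vtx lam d) := by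
  ext f
  simp only [ball, FPset, Finset.mem_filter, Finset.mem_univ, true_and, mem_Nset]
  have hfree : ∀ i : Fin (m * lam), isfree lam d 0 (vtx lam d) i := by
    intro i
    have hs : sh lam 0 i = (i : ℤ) + 1 := by simp [sh]
    by_cases h : (i : ℤ) + 1 ≤ (d * lam : ℤ)
    · left; rw [mem_vtx, hs]
      have : (0 : ℤ) ≤ (i : ℤ) := by positivity
      exact ⟨by linarith, h⟩
    · right; rw [hs]; linarith [not_le.mp h]
  constructor
  · rintro ⟨hfp, hch⟩
    refine ⟨fun i => ⟨iff_of_true (hfree i) (Nat.zero_le _), fun h => absurd (hfree i) h⟩,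
      fun k _ => hfp k, fun i _ => (dist_iff d hlam i _).mp ((cheb_ident_le d f).mp hch i),
      fun s hs1 hs2 hs3 => ?_⟩
    rw [mem_vtx]
    have hm0 : (0 : ℤ) ≤ (m : ℤ) * lam := by positivity
    have h0 : (0 : ℤ) < s := by push_cast at hs3 ⊢; linarith
    exact ⟨by linarith [Int.add_one_le_of_lt h0], hs2⟩
  · rintro ⟨c1, c2, c3, c4⟩
    exact ⟨fun k => c2 k (Nat.zero_le _),
      (cheb_ident_le d f).mpr fun i => (dist_iff d hlam i _).mpr (c3 i (Nat.zero_le _))⟩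

lemma fill_last {m lam : ℕ} (i : Fin (m * lam)) : fill m lam m i = ident m lam i := by
  apply Fin.ext
  have h : i.val / lam < m :=
    Nat.div_lt_of_lt_mul (lt_of_lt_of_eq i.isLt (Nat.mul_comm m lam))
  simp only [fill, ident]
  exact Nat.min_eq_left (Nat.le_pred_of_lt h)

lemma not_free_last {m lam d : ℕ} (P : Finset ℤ) (hP : P ⊆ vtx lam d)
    (i : Fin (m * lam)) : ¬ isfree lam d m P i := by
  have hs : sh lam m i ≤ 0 := by
    have h1 : (i : ℤ) < ((m * lam : ℕ) : ℤ) := by exact_mod_cast i.isLt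
    have h2 : ((m * lam : ℕ) : ℤ) = (m : ℤ) * lam := by push_cast; ring
    simp only [sh]; linarith
  have hd0 : (0 : ℤ) ≤ (d * lam : ℤ) := by positivity
  rintro (h | h)
  · have := (mem_vtx.mp (hP h)).1; linarith
  · linarith

lemma Nset_last_vtx (m lam d : ℕ) : Nset m lam d m (vtx lam d) = {ident m lam} := by
  ext f
  rw [mem_Nset, Finset.mem_singleton]
  have hnf := not_free_last (m := m) (vtx lam d) (le_refl _) 
  constructor
  · rintro ⟨c1, -, -, -⟩
    funext i
    rw [(c1 i).2 (hnf i), fill_last]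
  · rintro rfl
    refine ⟨fun i => ⟨iff_of_false (hnf i) (by have := (ident m lam i).isLt; omega),
        fun _ => (fill_last i).symm⟩,
      fun k hk => absurd k.isLt (by omega),
      fun i hi => absurd (ident m lam i).isLt (by omega),
      fun s hs1 hs2 hs3 => ?_⟩
    rw [mem_vtx]
    have h0 : (0 : ℤ) < s := by linarith
    exact ⟨by linarith [Int.add_one_le_of_lt h0], hs2⟩

lemma Nset_last_ne {m lam d : ℕ} {P : Finset ℤ} (hP : P ⊆ W lam d)
    (hcard : P.card = d * lam) (hne : P ≠ vtx lam d) : Nset m lam d m P = ∅ := by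
  rw [Finset.eq_empty_iff_forall_notMem]
  intro f hf
  rw [mem_Nset] at hf
  obtain ⟨-, -, -, c4⟩ := hf
  apply hne
  have hd0 : (0 : ℤ) ≤ (d * lam : ℤ) := by positivity
  have hm0 : (0 : ℤ) ≤ (m * lam : ℤ) := by positivity
  have hsub : vtx lam d ⊆ P := by
    intro s hs
    rw [mem_vtx] at hs
    exact c4 s (by linarith [hs.1]) hs.2 (by push_cast; linarith [hs.1])
  exact (Finset.eq_of_subset_of_card_le hsub (by rw [hcard, card_vtx])).symm

end VLR2

namespace VLR3
open VLR VLR2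

lemma sh_injective (lam t : ℕ) {n : ℕ} : Function.Injective (fun i : Fin n => sh lam t i) :=
  fun _ _ h => sh_inj h

lemma fin_coe_lt {m lam : ℕ} (i : Fin (m * lam)) : (i : ℤ) < (m : ℤ) * lam := by
  have h := i.isLt
  have : ((m * lam : ℕ) : ℤ) = (m : ℤ) * lam := by push_cast; ring
  rw [← this]; exact_mod_cast h

lemma exists_sh_eq {m lam : ℕ} (t : ℕ) {s : ℤ} (hlo : 1 ≤ s + (t : ℤ) * lam)
    (hhi : s + (t : ℤ) * lam ≤ (m : ℤ) * lam) : ∃ i : Fin (m * lam), sh lam t i = s := by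
  have hnn : 0 ≤ s + (t : ℤ) * lam - 1 := by linarith
  have hcast : (((s + (t : ℤ) * lam - 1).toNat : ℤ)) = s + (t : ℤ) * lam - 1 :=
    Int.toNat_of_nonneg hnn
  have hlt : (s + (t : ℤ) * lam - 1).toNat < m * lam := by
    have : (((s + (t : ℤ) * lam - 1).toNat : ℤ)) < ((m * lam : ℕ) : ℤ) := by
      rw [hcast]; push_cast; linarith
    exact_mod_cast this
  refine ⟨⟨(s + (t : ℤ) * lam - 1).toNat, hlt⟩, ?_⟩
  show (((s + (t : ℤ) * lam - 1).toNat : ℤ)) + 1 - (t : ℤ) * lam = s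
  rw [hcast]; ring

lemma mem_XS {lam d : ℕ} {P X : Finset ℤ} :
    X ∈ XS lam d P ↔ X ⊆ P ∪ Qset lam d ∧ X.card = lam ∧
      ∀ s ∈ (P ∪ Qset lam d) \ X, -(d * lam : ℤ) + lam < s := by
  simp only [XS, Finset.mem_filter, Finset.mem_powerset]

lemma PQ_bounds {lam d : ℕ} {P : Finset ℤ} (hP : P ⊆ W lam d) {x : ℤ}
    (hx : x ∈ P ∪ Qset lam d) : -(d * lam : ℤ) + 1 ≤ x ∧ x ≤ (d * lam : ℤ) + lam := by
  have hl : (0 : ℤ) ≤ lam := by positivity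
  have hd : (0 : ℤ) ≤ (d * lam : ℤ) := by positivity
  rcases Finset.mem_union.mp hx with h | h
  · have := mem_W.mp (hP h); exact ⟨this.1, by linarith [this.2]⟩
  · have := mem_Q.mp h; exact ⟨by linarith [this.1], this.2⟩

lemma card_Qset (lam d : ℕ) : (Qset lam d).card = lam := by
  rw [Qset, Int.card_Icc]
  have : (d * lam : ℤ) + lam + 1 - ((d * lam : ℤ) + 1) = ((lam : ℕ) : ℤ) := by push_cast; ring
  rw [this, Int.toNat_natCast]

lemma P_disj_Q {lam d : ℕ} {P : Finset ℤ} (hP : P ⊆ W lam d) : Disjoint P (Qset lam d) := by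
  rw [Finset.disjoint_left]
  intro x hx hq
  have h1 := (mem_W.mp (hP hx)).2
  have h2 := (mem_Q.mp hq).1
  linarith

lemma card_PQ {lam d : ℕ} {P : Finset ℤ} (hP : P ⊆ W lam d) (hcard : P.card = d * lam) :
    (P ∪ Qset lam d).card = d * lam + lam := by
  rw [Finset.card_union_of_disjoint (P_disj_Q hP), hcard, card_Qset]

lemma card_rest {lam d : ℕ} {P X : Finset ℤ} (hP : P ⊆ W lam d) (hcard : P.card = d * lam)
    (hX : X ∈ XS lam d P) : ((P ∪ Qset lam d) \ X).card = d * lam := by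
  obtain ⟨h1, h2, -⟩ := mem_XS.mp hX
  rw [Finset.card_sdiff_of_subset h1, card_PQ hP hcard, h2]
  omega

lemma nxt_eq_image {lam d : ℕ} {P X : Finset ℤ} (hP : P ⊆ W lam d) :
    nxt lam d P X = ((P ∪ Qset lam d) \ X).image fun s => s - (lam : ℤ) := by
  rw [nxt, Finset.sdiff_eq_self_iff_disjoint]
  rw [Finset.disjoint_left]
  rintro y hy hq
  obtain ⟨s, hs, rfl⟩ := Finset.mem_image.mp hy
  have h1 := (PQ_bounds hP (Finset.mem_sdiff.mp hs).1).2
  have h2 := (mem_Q.mp hq).1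
  linarith

lemma mem_nxt {lam d : ℕ} {P X : Finset ℤ} (hP : P ⊆ W lam d) {y : ℤ} :
    y ∈ nxt lam d P X ↔ y + lam ∈ (P ∪ Qset lam d) \ X := by
  rw [nxt_eq_image hP, Finset.mem_image]
  constructor
  · rintro ⟨s, hs, rfl⟩
    simpa using hs
  · intro h
    exact ⟨y + lam, h, by ring⟩

lemma nxt_subset_W {lam d : ℕ} {P X : Finset ℤ} (hP : P ⊆ W lam d) (hX : X ∈ XS lam d P) :
    nxt lam d P X ⊆ W lam d := by
  obtain ⟨-, -, hlow⟩ := mem_XS.mp hX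
  intro y hy
  rw [mem_nxt hP] at hy
  have hb := PQ_bounds hP (Finset.mem_sdiff.mp hy).1
  have hl := hlow _ hy
  rw [mem_W]
  constructor
  · have : -(d * lam : ℤ) < y := by linarith
    linarith [Int.add_one_le_of_lt this]
  · linarith

lemma nxt_card {lam d : ℕ} {P X : Finset ℤ} (hP : P ⊆ W lam d) (hcard : P.card = d * lam)
    (hX : X ∈ XS lam d P) : (nxt lam d P X).card = d * lam := by
  rw [nxt_eq_image hP,
    Finset.card_image_of_injective _ (sub_left_injective (b := (lam : ℤ))),
    card_rest hP hcard hX]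

lemma nxt_mem_verts {lam d : ℕ} {P X : Finset ℤ} (hP : P ⊆ W lam d) (hcard : P.card = d * lam)
    (hX : X ∈ XS lam d P) : nxt lam d P X ∈ verts lam d :=
  mem_verts.mpr ⟨nxt_subset_W hP hX, nxt_card hP hcard hX⟩

lemma nxt_min {lam d t : ℕ} {P X : Finset ℤ} (hP : P ⊆ W lam d)
    (hmin : ∀ x ∈ P, 1 - (t : ℤ) * lam ≤ x) :
    ∀ y ∈ nxt lam d P X, 1 - ((t : ℤ) + 1) * lam ≤ y := by
  intro y hy
  rw [mem_nxt hP] at hy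
  have h0 : (0 : ℤ) ≤ (t : ℤ) * lam := by positivity
  rcases Finset.mem_union.mp (Finset.mem_sdiff.mp hy).1 with h | h
  · have := hmin _ h; nlinarith
  · have := (mem_Q.mp h).1
    have hd : (0 : ℤ) ≤ (d * lam : ℤ) := by positivity
    nlinarith

lemma mem_Xof {m lam t : ℕ} {f : Fin (m * lam) → Fin m} {x : ℤ} :
    x ∈ Xof m lam t f ↔ ∃ i, (f i).val = t ∧ sh lam t i = x := by
  simp [Xof]

lemma sh_mem_Xof {m lam t : ℕ} {f : Fin (m * lam) → Fin m} (i : Fin (m * lam)) :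
    sh lam t i ∈ Xof m lam t f ↔ (f i).val = t := by
  rw [mem_Xof]
  constructor
  · rintro ⟨i', h', hsh⟩
    rwa [← sh_inj hsh]
  · intro h; exact ⟨i, h, rfl⟩

lemma free0 {m lam d : ℕ} (i : Fin (m * lam)) : isfree lam d 0 (vtx lam d) i := by
  have hs : sh lam 0 i = (i : ℤ) + 1 := by simp [sh]
  by_cases h : (i : ℤ) + 1 ≤ (d * lam : ℤ)
  · left; rw [mem_vtx, hs]
    have : (0 : ℤ) ≤ (i : ℤ) := by positivity
    exact ⟨by linarith, h⟩
  · right; rw [hs]; linarith [not_le.mp h]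

lemma P_eq_vtx_of_min {lam d : ℕ} {P : Finset ℤ} (hP : P ⊆ W lam d)
    (hcard : P.card = d * lam) (hmin : ∀ x ∈ P, (1 : ℤ) ≤ x) : P = vtx lam d := by
  apply Finset.eq_of_subset_of_card_le
  · intro x hx
    exact mem_vtx.mpr ⟨hmin x hx, (mem_W.mp (hP hx)).2⟩
  · rw [card_vtx, hcard]

end VLR3

namespace VLR4
open VLR VLR2 VLR3

section
variable {m lam d t : ℕ} {P : Finset ℤ}

lemma Xof_mem_XS (hlam : 0 < lam) (ht : t < m) (hP : P ⊆ W lam d)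
    (hmin : ∀ x ∈ P, 1 - (t : ℤ) * lam ≤ x)
    {f : Fin (m * lam) → Fin m} (hf : f ∈ Nset m lam d t P) :
    Xof m lam t f ∈ XS lam d P := by
  obtain ⟨c1, c2, c3, c4⟩ := mem_Nset.mp hf
  have hd0 : (0 : ℤ) ≤ (d * lam : ℤ) := by positivity
  have ht0 : (0 : ℤ) ≤ (t : ℤ) * lam := by positivity
  have htm : ((t : ℤ) + 1) * lam ≤ (m : ℤ) * lam := by
    have : (t : ℤ) + 1 ≤ m := by exact_mod_cast ht
    nlinarith [show (0:ℤ) ≤ lam by positivity]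
  rw [mem_XS]
  refine ⟨?_, ?_, ?_⟩
  · -- X ⊆ P ∪ Q
    intro x hx
    obtain ⟨i, hi, rfl⟩ := mem_Xof.mp hx
    have hfree : isfree lam d t P i := (c1 i).1.mpr (le_of_eq hi.symm)
    rcases hfree with h | h
    · exact Finset.mem_union_left _ h
    · refine Finset.mem_union_right _ (mem_Q.mpr ⟨by linarith [Int.add_one_le_of_lt h], ?_⟩)
      have hw := (c3 i (le_of_eq hi.symm)).2
      rw [hi] at hw
      simp only [sh]
      linarith [hw]
  · -- card
    have hfe : (Finset.univ.filter (fun i => (f i).val = t)) =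
        (Finset.univ.filter (fun i => f i = (⟨t, ht⟩ : Fin m))) := by
      apply Finset.filter_congr
      intro i _
      simp [Fin.ext_iff]
    rw [Xof, Finset.card_image_of_injective _ (sh_injective lam t), hfe]
    exact c2 ⟨t, ht⟩ (le_refl t)
  · -- low condition
    intro s hs
    obtain ⟨hsPQ, hsX⟩ := Finset.mem_sdiff.mp hs
    by_contra hc
    push_neg at hc
    have hlo : 1 ≤ s + (t : ℤ) * lam := by
      rcases Finset.mem_union.mp hsPQ with h | h
      · linarith [hmin s h]
      · linarith [(mem_Q.mp h).1]
    have hhi : s + (t : ℤ) * lam ≤ (m : ℤ) * lam := by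
      have hl0 : (0 : ℤ) ≤ lam := by positivity
      linarith
    obtain ⟨i, hshi⟩ := exists_sh_eq t hlo hhi
    have hfree : isfree lam d t P i := by
      rcases Finset.mem_union.mp hsPQ with h | h
      · left; rwa [hshi]
      · right; rw [hshi]; linarith [(mem_Q.mp h).1]
    have hle : t ≤ (f i).val := (c1 i).1.mp hfree
    rcases eq_or_lt_of_le hle with heq | hlt
    · exact hsX (hshi ▸ (sh_mem_Xof i).mpr heq.symm)
    · have hw := (c3 i (le_of_lt hlt)).1
      have hge : ((t : ℤ) + 1 - d) * lam ≤ (((f i).val : ℤ) - d) * lam := by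
        have : (t : ℤ) + 1 ≤ ((f i).val : ℤ) := by exact_mod_cast hlt
        have hl0 : (0 : ℤ) ≤ lam := by positivity
        nlinarith
      have : sh lam t i = s := hshi
      simp only [sh] at this
      nlinarith [hw, hge]
end
end VLR4

namespace VLR5
open VLR VLR2 VLR3 VLR4

def phi (m lam t : ℕ) (f : Fin (m * lam) → Fin m) : Fin (m * lam) → Fin m :=
  fun i => if t + 1 ≤ (f i).val then f i else fill m lam (t + 1) i

def psi (m lam : ℕ) (t : ℕ) (ht : t < m) (X : Finset ℤ) (g : Fin (m * lam) → Fin m) :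
    Fin (m * lam) → Fin m :=
  fun i => if t + 1 ≤ (g i).val then g i
    else if sh lam t i ∈ X then ⟨t, ht⟩ else fill m lam t i

lemma fill_succ_le (m lam t : ℕ) (i : Fin (m * lam)) : (fill m lam (t + 1) i).val ≤ t := by
  have : (fill m lam (t + 1) i).val = min (i.val / lam) (t + 1 - 1) := rfl
  rw [this]
  exact le_trans (min_le_right _ _) (by omega)

lemma fill_le (m lam t : ℕ) (i : Fin (m * lam)) : (fill m lam t i).val ≤ t := by
  have : (fill m lam t i).val = min (i.val / lam) (t - 1) := rfl
  rw [this]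
  exact le_trans (min_le_right _ _) (by omega)

lemma fill_lt (m lam : ℕ) {t : ℕ} (h : 1 ≤ t) (i : Fin (m * lam)) :
    (fill m lam t i).val < t := by
  have : (fill m lam t i).val = min (i.val / lam) (t - 1) := rfl
  rw [this]
  exact lt_of_le_of_lt (min_le_right _ _) (by omega)

lemma free_next {m lam d t : ℕ} {P X : Finset ℤ} (hP : P ⊆ W lam d) (i : Fin (m * lam)) :
    isfree lam d (t + 1) (nxt lam d P X) i ↔
      (sh lam t i ∈ (P ∪ Qset lam d) \ X ∨ (d * lam : ℤ) + lam < sh lam t i) := by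
  simp only [isfree, sh_succ, mem_nxt hP, sub_add_cancel]
  apply or_congr Iff.rfl
  constructor <;> intro h <;> linarith

lemma free_at_zero {m lam d : ℕ} {P : Finset ℤ} (hP : P ⊆ W lam d)
    (hcard : P.card = d * lam) (hmin : ∀ x ∈ P, (1 : ℤ) ≤ x) (i : Fin (m * lam)) :
    isfree lam d 0 P i := by
  rw [P_eq_vtx_of_min hP hcard hmin]
  exact free0 i

section
variable {m lam d t : ℕ} {P X : Finset ℤ}

lemma phi_mem (hlam : 0 < lam) (ht : t < m) (hP : P ⊆ W lam d) (hcard : P.card = d * lam)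
    (hmin : ∀ x ∈ P, 1 - (t : ℤ) * lam ≤ x) (hX : X ∈ XS lam d P)
    {f : Fin (m * lam) → Fin m} (hf : f ∈ Nset m lam d t P) (hXf : Xof m lam t f = X) :
    phi m lam t f ∈ Nset m lam d (t + 1) (nxt lam d P X) := by
  obtain ⟨c1, c2, c3, c4⟩ := mem_Nset.mp hf
  obtain ⟨hXsub, hXcard, hlow⟩ := mem_XS.mp hX
  have hshX : ∀ i, sh lam t i ∈ X ↔ (f i).val = t := fun i => hXf ▸ sh_mem_Xof i
  have hd0 : (0 : ℤ) ≤ (d * lam : ℤ) := by positivity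
  have hl0 : (0 : ℤ) ≤ (lam : ℤ) := by positivity
  rw [mem_Nset]
  refine ⟨fun i => ?_, fun k hk => ?_, fun i hi => ?_, fun s hs1 hs2 hs3 => ?_⟩
  · -- part 1
    by_cases h1 : t + 1 ≤ (f i).val
    · have hphi : phi m lam t f i = f i := if_pos h1
      have hfree : isfree lam d t P i := (c1 i).1.mpr (by omega)
      have hnX : sh lam t i ∉ X := fun hc => by have := (hshX i).mp hc; omega
      have hF : isfree lam d (t + 1) (nxt lam d P X) i := by
        rw [free_next hP i]
        rcases hfree with h | h
        · exact Or.inl (Finset.mem_sdiff.mpr ⟨Finset.mem_union_left _ h, hnX⟩)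
        · rcases le_or_gt (sh lam t i) ((d * lam : ℤ) + lam) with h2 | h2
          · exact Or.inl (Finset.mem_sdiff.mpr ⟨Finset.mem_union_right _
              (mem_Q.mpr ⟨Int.add_one_le_of_lt h, h2⟩), hnX⟩)
          · exact Or.inr h2
      exact ⟨iff_of_true hF (by rw [hphi]; omega), fun hc => absurd hF hc⟩
    · have hphi : phi m lam t f i = fill m lam (t + 1) i := if_neg h1
      have hF : ¬ isfree lam d (t + 1) (nxt lam d P X) i := by
        rw [free_next hP i]
        rintro (h | h)
        · obtain ⟨hPQ, hnX⟩ := Finset.mem_sdiff.mp h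
          by_cases h2 : (f i).val = t
          · exact hnX ((hshX i).mpr h2)
          · have hnf : ¬ isfree lam d t P i := fun hc => by have := (c1 i).1.mp hc; omega
            rcases Finset.mem_union.mp hPQ with h3 | h3
            · exact hnf (Or.inl h3)
            · exact hnf (Or.inr (by linarith [(mem_Q.mp h3).1]))
        · by_cases h2 : (f i).val = t
          · have hb := PQ_bounds hP (hXsub ((hshX i).mpr h2))
            linarith [hb.2]
          · have hnf : ¬ isfree lam d t P i := fun hc => by have := (c1 i).1.mp hc; omega
            exact hnf (Or.inr (by linarith))
      refine ⟨iff_of_false hF ?_, fun _ => hphi⟩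
      rw [hphi]
      have hv := fill_succ_le m lam t i
      omega
  · -- part 2
    have hfe : Finset.univ.filter (fun i => phi m lam t f i = k) =
        Finset.univ.filter (fun i => f i = k) := by
      apply Finset.filter_congr
      intro i _
      by_cases h1 : t + 1 ≤ (f i).val
      · simp only [phi, if_pos h1]
      · simp only [phi, if_neg h1]
        have hv := fill_succ_le m lam t i
        constructor
        · intro hc
          exfalso
          have := congrArg Fin.val hc
          omega
        · intro hc
          exfalso
          have := congrArg Fin.val hc
          omega
    rw [hfe]
    exact c2 k (by omega)
  · -- part 3
    by_cases h1 : t + 1 ≤ (f i).val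
    · have hphi : phi m lam t f i = f i := if_pos h1
      rw [hphi] at hi ⊢
      exact c3 i (by omega)
    · exfalso
      have hphi : phi m lam t f i = fill m lam (t + 1) i := if_neg h1
      rw [hphi] at hi
      have hv := fill_succ_le m lam t i
      omega
  · -- part 4
    push_cast at hs3
    rw [mem_nxt hP, Finset.mem_sdiff]
    constructor
    · rcases le_or_gt (s + lam) (d * lam : ℤ) with h2 | h2
      · exact Finset.mem_union_left _ (c4 (s + lam) (by linarith) h2 (by linarith))
      · exact Finset.mem_union_right _ (mem_Q.mpr ⟨Int.add_one_le_of_lt h2, by linarith⟩)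
    · intro hc
      rw [← hXf] at hc
      obtain ⟨i, hi, hsh⟩ := mem_Xof.mp hc
      have hilt := fin_coe_lt i
      simp only [sh] at hsh
      linarith

lemma psi_mem (hlam : 0 < lam) (ht : t < m) (hP : P ⊆ W lam d) (hcard : P.card = d * lam)
    (hmin : ∀ x ∈ P, 1 - (t : ℤ) * lam ≤ x) (hX : X ∈ XS lam d P)
    {g : Fin (m * lam) → Fin m} (hg : g ∈ Nset m lam d (t + 1) (nxt lam d P X)) :
    psi m lam t ht X g ∈ Nset m lam d t P ∧ Xof m lam t (psi m lam t ht X g) = X := by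
  obtain ⟨d1, d2, d3, d4⟩ := mem_Nset.mp hg
  obtain ⟨hXsub, hXcard, hlow⟩ := mem_XS.mp hX
  have hd0 : (0 : ℤ) ≤ (d * lam : ℤ) := by positivity
  have hl0 : (0 : ℤ) ≤ (lam : ℤ) := by positivity
  have ht0 : (0 : ℤ) ≤ (t : ℤ) * lam := by positivity
  have htm : ((t : ℤ) + 1) * lam ≤ (m : ℤ) * lam := by
    have h1 : (t : ℤ) + 1 ≤ m := by exact_mod_cast ht
    nlinarith
  have hgfree : ∀ i : Fin (m * lam), t + 1 ≤ (g i).val ↔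
      (sh lam t i ∈ (P ∪ Qset lam d) \ X ∨ (d * lam : ℤ) + lam < sh lam t i) :=
    fun i => Iff.trans (d1 i).1.symm (free_next hP i)
  have hb3 : ∀ i : Fin (m * lam), ¬(t + 1 ≤ (g i).val) → sh lam t i ∉ X →
      ¬ isfree lam d t P i := by
    intro i h1 h2 hfree
    apply h1
    rw [hgfree i]
    rcases hfree with h | h
    · exact Or.inl (Finset.mem_sdiff.mpr ⟨Finset.mem_union_left _ h, h2⟩)
    · rcases le_or_gt (sh lam t i) ((d * lam : ℤ) + lam) with h3 | h3
      · exact Or.inl (Finset.mem_sdiff.mpr ⟨Finset.mem_union_right _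
          (mem_Q.mpr ⟨Int.add_one_le_of_lt h, h3⟩), h2⟩)
      · exact Or.inr h3
  have hb3t : ∀ i : Fin (m * lam), ¬(t + 1 ≤ (g i).val) → sh lam t i ∉ X → 1 ≤ t := by
    intro i h1 h2
    by_contra h0
    have ht00 : t = 0 := by omega
    subst ht00
    exact hb3 i h1 h2 (free_at_zero hP hcard
      (fun x hx => by have := hmin x hx; push_cast at this; linarith) i)
  have hXiff : ∀ i : Fin (m * lam), sh lam t i ∈ X → ¬ (t + 1 ≤ (g i).val) := by
    intro i hx h1
    rcases (hgfree i).mp h1 with h | h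
    · exact (Finset.mem_sdiff.mp h).2 hx
    · have := PQ_bounds hP (hXsub hx)
      linarith [this.2]
  have hXsh : ∀ x ∈ X, ∃ i : Fin (m * lam), sh lam t i = x := by
    intro x hx
    have hxPQ := hXsub hx
    have hb := PQ_bounds hP hxPQ
    have hlo : 1 ≤ x + (t : ℤ) * lam := by
      rcases Finset.mem_union.mp hxPQ with h | h
      · linarith [hmin x h]
      · linarith [(mem_Q.mp h).1]
    have hhi : x + (t : ℤ) * lam ≤ (m : ℤ) * lam := by
      by_contra hc
      push_neg at hc
      have hxgl : (lam : ℤ) < x := by linarith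
      have h4 := d4 (x - lam)
        (by linarith [Int.add_one_le_of_lt (show (0 : ℤ) < x - lam by linarith)])
        (by linarith [hb.2]) (by push_cast; linarith)
      rw [mem_nxt hP, sub_add_cancel, Finset.mem_sdiff] at h4
      exact h4.2 hx
    exact exists_sh_eq t hlo hhi
  constructor
  · rw [mem_Nset]
    refine ⟨fun i => ?_, fun k hk => ?_, fun i hi => ?_, fun s hs1 hs2 hs3 => ?_⟩
    · -- part 1
      by_cases h1 : t + 1 ≤ (g i).val
      · have hpsi : psi m lam t ht X g i = g i := if_pos h1
        have hfree : isfree lam d t P i := by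
          rcases (hgfree i).mp h1 with h | h
          · rcases Finset.mem_union.mp (Finset.mem_sdiff.mp h).1 with h3 | h3
            · exact Or.inl h3
            · exact Or.inr (by linarith [(mem_Q.mp h3).1])
          · exact Or.inr (by linarith)
        exact ⟨iff_of_true hfree (by rw [hpsi]; omega), fun hc => absurd hfree hc⟩
      · by_cases h2 : sh lam t i ∈ X
        · have hpsi : psi m lam t ht X g i = ⟨t, ht⟩ := by
            simp only [psi, if_neg h1, if_pos h2]
          have hfree : isfree lam d t P i := by
            rcases Finset.mem_union.mp (hXsub h2) with h3 | h3
            · exact Or.inl h3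
            · exact Or.inr (by linarith [(mem_Q.mp h3).1])
          exact ⟨iff_of_true hfree (by rw [hpsi]), fun hc => absurd hfree hc⟩
        · have hpsi : psi m lam t ht X g i = fill m lam t i := by
            simp only [psi, if_neg h1, if_neg h2]
          refine ⟨iff_of_false (hb3 i h1 h2) ?_, fun _ => hpsi⟩
          rw [hpsi]
          have := fill_lt m lam (hb3t i h1 h2) i
          omega
    · -- part 2
      rcases eq_or_lt_of_le hk with heq | hlt
      · have hfe : Finset.univ.filter (fun i => psi m lam t ht X g i = k) =
            Finset.univ.filter (fun i => sh lam t i ∈ X) := by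
          apply Finset.filter_congr
          intro i _
          by_cases h1 : t + 1 ≤ (g i).val
          · simp only [psi, if_pos h1]
            constructor
            · intro hc
              exfalso
              have := congrArg Fin.val hc
              omega
            · intro hc
              exact absurd h1 (hXiff i hc)
          · by_cases h2 : sh lam t i ∈ X
            · simp only [psi, if_neg h1, if_pos h2]
              exact iff_of_true (Fin.ext heq) h2
            · simp only [psi, if_neg h1, if_neg h2]
              refine iff_of_false ?_ h2
              intro hc
              have hlt2 := fill_lt m lam (hb3t i h1 h2) i
              have := congrArg Fin.val hc
              omega
        have hcX : (Finset.univ.filter (fun i : Fin (m * lam) => sh lam t i ∈ X)).card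
            = X.card := by
          apply Finset.card_bij (fun i _ => sh lam t i)
          · intro a ha
            exact (Finset.mem_filter.mp ha).2
          · intro a _ b _ hab
            exact sh_inj hab
          · intro x hx
            obtain ⟨i, hshi⟩ := hXsh x hx
            exact ⟨i, Finset.mem_filter.mpr ⟨Finset.mem_univ i, by rwa [hshi]⟩, hshi⟩
        rw [hfe, hcX, hXcard]
      · have hfe : Finset.univ.filter (fun i => psi m lam t ht X g i = k) =
            Finset.univ.filter (fun i => g i = k) := by
          apply Finset.filter_congr
          intro i _
          by_cases h1 : t + 1 ≤ (g i).val
          · simp only [psi, if_pos h1]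
          · by_cases h2 : sh lam t i ∈ X
            · simp only [psi, if_neg h1, if_pos h2]
              constructor
              · intro hc
                exfalso
                have := congrArg Fin.val hc
                simp at this
                omega
              · intro hc
                exfalso
                have := congrArg Fin.val hc
                omega
            · simp only [psi, if_neg h1, if_neg h2]
              have hv := fill_le m lam t i
              constructor
              · intro hc
                exfalso
                have := congrArg Fin.val hc
                omega
              · intro hc
                exfalso
                have := congrArg Fin.val hc
                omega
        rw [hfe]
        exact d2 k (by omega)
    · -- part 3
      by_cases h1 : t + 1 ≤ (g i).val
      · have hpsi : psi m lam t ht X g i = g i := if_pos h1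
        rw [hpsi] at hi ⊢
        exact d3 i h1
      · by_cases h2 : sh lam t i ∈ X
        · have hpsi : psi m lam t ht X g i = ⟨t, ht⟩ := by
            simp only [psi, if_neg h1, if_pos h2]
          rw [hpsi]
          have hv : ((⟨t, ht⟩ : Fin m)).val = t := rfl
          rw [hv]
          have hb := PQ_bounds hP (hXsub h2)
          simp only [sh] at hb
          have hr1 : ((t : ℤ) - d) * lam = (t : ℤ) * lam - (d * lam : ℤ) := by push_cast; ring
          have hr2 : ((t : ℤ) + d + 1) * lam = (t : ℤ) * lam + (d * lam : ℤ) + lam := by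
            push_cast; ring
          constructor
          · rw [hr1]; linarith [hb.1]
          · rw [hr2]; linarith [hb.2]
        · exfalso
          have hpsi : psi m lam t ht X g i = fill m lam t i := by
            simp only [psi, if_neg h1, if_neg h2]
          rw [hpsi] at hi
          have := fill_lt m lam (hb3t i h1 h2) i
          omega
    · -- part 4
      push_cast at hs3
      have hsl : (lam : ℤ) < s := by linarith
      have h4 := d4 (s - lam)
        (by linarith [Int.add_one_le_of_lt (show (0 : ℤ) < s - lam by linarith)])
        (by linarith) (by push_cast; linarith)
      rw [mem_nxt hP, sub_add_cancel, Finset.mem_sdiff] at h4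
      rcases Finset.mem_union.mp h4.1 with h | h
      · exact h
      · exfalso
        linarith [(mem_Q.mp h).1]
  · -- Xof (psi g) = X
    ext x
    rw [mem_Xof]
    constructor
    · rintro ⟨i, hit, rfl⟩
      by_cases h1 : t + 1 ≤ (g i).val
      · exfalso
        simp only [psi, if_pos h1] at hit
        omega
      · by_cases h2 : sh lam t i ∈ X
        · exact h2
        · exfalso
          simp only [psi, if_neg h1, if_neg h2] at hit
          have := fill_lt m lam (hb3t i h1 h2) i
          omega
    · intro hx
      obtain ⟨i, hshi⟩ := hXsh x hx
      have hxX : sh lam t i ∈ X := by rwa [hshi]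
      refine ⟨i, ?_, hshi⟩
      have h1 := hXiff i hxX
      simp only [psi, if_neg h1, if_pos hxX, Fin.val_mk]

lemma psi_phi (ht : t < m) {f : Fin (m * lam) → Fin m} (hf : f ∈ Nset m lam d t P)
    (hXf : Xof m lam t f = X) : psi m lam t ht X (phi m lam t f) = f := by
  obtain ⟨c1, c2, c3, c4⟩ := mem_Nset.mp hf
  have hshX : ∀ i, sh lam t i ∈ X ↔ (f i).val = t := fun i => hXf ▸ sh_mem_Xof i
  funext i
  by_cases h1 : t + 1 ≤ (f i).val
  · have hphi : phi m lam t f i = f i := if_pos h1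
    simp only [psi, hphi, if_pos h1]
  · have hphi : phi m lam t f i = fill m lam (t + 1) i := if_neg h1
    have hv := fill_succ_le m lam t i
    have hn1 : ¬ (t + 1 ≤ (phi m lam t f i).val) := by rw [hphi]; omega
    by_cases h2 : (f i).val = t
    · simp only [psi, if_neg hn1, if_pos ((hshX i).mpr h2)]
      exact Fin.ext h2.symm
    · have hnX : sh lam t i ∉ X := fun hc => h2 ((hshX i).mp hc)
      simp only [psi, if_neg hn1, if_neg hnX]
      have hnf : ¬ isfree lam d t P i := fun hc => by have := (c1 i).1.mp hc; omega
      exact ((c1 i).2 hnf).symm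

lemma phi_psi (hP : P ⊆ W lam d) (ht : t < m) {g : Fin (m * lam) → Fin m}
    (hg : g ∈ Nset m lam d (t + 1) (nxt lam d P X)) :
    phi m lam t (psi m lam t ht X g) = g := by
  obtain ⟨d1, -, -, -⟩ := mem_Nset.mp hg
  funext i
  by_cases h1 : t + 1 ≤ (g i).val
  · have hpsi : psi m lam t ht X g i = g i := if_pos h1
    simp only [phi, hpsi, if_pos h1]
  · have hval : (psi m lam t ht X g i).val ≤ t := by
      by_cases h2 : sh lam t i ∈ X
      · simp only [psi, if_neg h1, if_pos h2, Fin.val_mk, le_refl]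
      · simp only [psi, if_neg h1, if_neg h2]
        exact fill_le m lam t i
    have hn1 : ¬ (t + 1 ≤ (psi m lam t ht X g i).val) := by omega
    simp only [phi, if_neg hn1]
    have hnf : ¬ isfree lam d (t + 1) (nxt lam d P X) i := fun hc => h1 ((d1 i).1.mp hc)
    exact ((d1 i).2 hnf).symm

end
end VLR5

namespace VLR6
open VLR VLR2 VLR3 VLR4 VLR5

section
variable {m lam d t : ℕ} {P : Finset ℤ}

lemma step (hlam : 0 < lam) (ht : t < m) (hP : P ⊆ W lam d) (hcard : P.card = d * lam)
    (hmin : ∀ x ∈ P, 1 - (t : ℤ) * lam ≤ x) :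
    (Nset m lam d t P).card =
      ∑ P' ∈ verts lam d, aent lam d P P' * (Nset m lam d (t + 1) P').card := by
  have hmaps : ∀ f ∈ Nset m lam d t P, Xof m lam t f ∈ XS lam d P :=
    fun f hf => Xof_mem_XS hlam ht hP hmin hf
  rw [Finset.card_eq_sum_card_fiberwise hmaps]
  have hfib : ∀ X ∈ XS lam d P,
      ((Nset m lam d t P).filter (fun f => Xof m lam t f = X)).card
        = (Nset m lam d (t + 1) (nxt lam d P X)).card := by
    intro X hX
    apply Finset.card_bij' (fun f _ => phi m lam t f) (fun g _ => psi m lam t ht X g)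
    · intro f hf
      obtain ⟨hf1, hf2⟩ := Finset.mem_filter.mp hf
      exact phi_mem hlam ht hP hcard hmin hX hf1 hf2
    · intro g hg
      obtain ⟨h1, h2⟩ := psi_mem hlam ht hP hcard hmin hX hg
      exact Finset.mem_filter.mpr ⟨h1, h2⟩
    · intro f hf
      obtain ⟨hf1, hf2⟩ := Finset.mem_filter.mp hf
      exact psi_phi ht hf1 hf2
    · intro g hg
      exact phi_psi hP ht hg
  rw [Finset.sum_congr rfl hfib]
  have hmaps2 : ∀ X ∈ XS lam d P, nxt lam d P X ∈ verts lam d :=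
    fun X hX => nxt_mem_verts hP hcard hX
  rw [← Finset.sum_fiberwise_of_maps_to hmaps2
    (fun X => (Nset m lam d (t + 1) (nxt lam d P X)).card)]
  apply Finset.sum_congr rfl
  intro P' _
  have hconst : ∀ X ∈ (XS lam d P).filter (fun X => nxt lam d P X = P'),
      (Nset m lam d (t + 1) (nxt lam d P X)).card = (Nset m lam d (t + 1) P').card :=
    fun X hX => by rw [(Finset.mem_filter.mp hX).2]
  rw [Finset.sum_congr rfl hconst, Finset.sum_const, smul_eq_mul]
  congr 1
  unfold aent
  apply congrArg
  apply Finset.filter_congr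
  intro X _
  exact eq_comm

end

lemma AHZ_apply (lam d : ℕ) (Pm P'm : {p // p ∈ verts lam d}) :
    AHZ lam d Pm P'm = (aent lam d Pm.val P'm.val : ℤ) := by
  unfold AHZ aent XS nxt
  rw [Finset.filter_filter]
  norm_cast
  apply congrArg
  apply Finset.filter_congr
  intro X _
  tauto

lemma edge_min {lam d t : ℕ} {Pm P'm : {p // p ∈ verts lam d}}
    (h : AHZ lam d Pm P'm ≠ 0) (hmin : ∀ x ∈ Pm.val, 1 - (t : ℤ) * lam ≤ x) :
    ∀ x ∈ P'm.val, 1 - ((t : ℤ) + 1) * lam ≤ x := by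
  rw [AHZ_apply] at h
  have hne : aent lam d Pm.val P'm.val ≠ 0 := by exact_mod_cast h
  obtain ⟨X, hXmem⟩ := Finset.card_ne_zero.mp hne
  obtain ⟨hXS, hEq⟩ := Finset.mem_filter.mp hXmem
  rw [hEq]
  exact nxt_min (mem_verts.mp Pm.property).1 hmin

lemma iter (m lam d : ℕ) (hlam : 0 < lam) :
    ∀ r : ℕ, r ≤ m → ∀ (Pm : {p // p ∈ verts lam d}),
      (∀ x ∈ Pm.val, 1 - ((m - r : ℕ) : ℤ) * lam ≤ x) →
      ((Nset m lam d (m - r) Pm.val).card : ℤ) =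
        ∑ P'm : {p // p ∈ verts lam d},
          (AHZ lam d ^ r) Pm P'm * ((Nset m lam d m P'm.val).card : ℤ) := by
  intro r
  induction r with
  | zero =>
    intro _ Pm _
    simp only [Nat.sub_zero, pow_zero, Matrix.one_apply]
    rw [Finset.sum_congr rfl (fun P' _ => by
      rw [ite_mul, one_mul, zero_mul] :
      ∀ P' ∈ Finset.univ, (if Pm = P' then (1:ℤ) else 0) * ((Nset m lam d m P'.val).card : ℤ)
        = if Pm = P' then ((Nset m lam d m P'.val).card : ℤ) else 0)]
    rw [Finset.sum_ite_eq]
    simp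
  | succ r ih =>
    intro hr Pm hmin
    have htlt : m - (r + 1) < m := by omega
    have hPsub : Pm.val ⊆ W lam d := (mem_verts.mp Pm.property).1
    have hPcard : Pm.val.card = d * lam := (mem_verts.mp Pm.property).2
    have hstep := step hlam htlt hPsub hPcard hmin
    have hstepZ : ((Nset m lam d (m - (r + 1)) Pm.val).card : ℤ) =
        ∑ P' ∈ verts lam d,
          (aent lam d Pm.val P' : ℤ) * ((Nset m lam d (m - (r + 1) + 1) P').card : ℤ) := by
      exact_mod_cast hstep
    have hsucc : m - (r + 1) + 1 = m - r := by omega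
    rw [hsucc] at hstepZ
    rw [← Finset.sum_coe_sort (verts lam d)
      (fun P' => (aent lam d Pm.val P' : ℤ) * ((Nset m lam d (m - r) P').card : ℤ))] at hstepZ
    rw [hstepZ]
    have hterm : ∀ P' : {p // p ∈ verts lam d},
        (aent lam d Pm.val P'.val : ℤ) * ((Nset m lam d (m - r) P'.val).card : ℤ)
          = AHZ lam d Pm P' * ∑ P'' : {p // p ∈ verts lam d},
              (AHZ lam d ^ r) P' P'' * ((Nset m lam d m P''.val).card : ℤ) := by
      intro P'
      rw [← AHZ_apply]
      by_cases hz : AHZ lam d Pm P' = 0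
      · rw [hz, zero_mul, zero_mul]
      · congr 1
        apply ih (by omega) P'
        intro x hx
        have h2 := edge_min (t := m - (r + 1)) hz hmin x hx
        have heq : (((m - (r + 1) : ℕ)) : ℤ) + 1 = ((m - r : ℕ) : ℤ) := by omega
        rw [heq] at h2
        exact h2
    rw [Finset.sum_congr rfl (fun P' _ => hterm P')]
    rw [pow_succ']
    simp only [Finset.mul_sum]
    rw [Finset.sum_comm]
    apply Finset.sum_congr rfl
    intro P'' _
    rw [Matrix.mul_apply, Finset.sum_mul]
    apply Finset.sum_congr rfl
    intro P' _
    ring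

lemma Vinf_eq (m lam d : ℕ) (hlam : 0 < lam) :
    (Vinf m lam d : ℤ) = (AHZ lam d ^ m)
      ⟨vtx lam d, vtx_mem_verts lam d⟩ ⟨vtx lam d, vtx_mem_verts lam d⟩ := by
  set vS : {p // p ∈ verts lam d} := ⟨vtx lam d, vtx_mem_verts lam d⟩ with hvS
  have hminv : ∀ x ∈ vS.val, 1 - ((m - m : ℕ) : ℤ) * lam ≤ x := by
    intro x hx
    have h1 := (mem_vtx.mp hx).1
    have : ((m - m : ℕ) : ℤ) = 0 := by omega
    rw [this]
    linarith
  have h0 := iter m lam d hlam m (le_refl m) vS hminv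
  rw [Nat.sub_self] at h0
  have hV : (Vinf m lam d : ℤ) = ((Nset m lam d 0 (vtx lam d)).card : ℤ) := by
    rw [Vinf, ball_eq hlam]
  have hsingle : (∑ P'm : {p // p ∈ verts lam d},
      (AHZ lam d ^ m) vS P'm * ((Nset m lam d m P'm.val).card : ℤ))
        = (AHZ lam d ^ m) vS vS * ((Nset m lam d m vS.val).card : ℤ) := by
    apply Finset.sum_eq_single vS
    · intro P' _ hne
      have hPsub := (mem_verts.mp P'.property).1
      have hPcard := (mem_verts.mp P'.property).2
      have hvne : P'.val ≠ vtx lam d := fun hc => hne (Subtype.ext hc)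
      rw [Nset_last_ne hPsub hPcard hvne]
      simp
    · intro h
      exact absurd (Finset.mem_univ _) h
  rw [hV, h0, hsingle]
  have : (Nset m lam d m vS.val).card = 1 := by
    rw [hvS, Nset_last_vtx]
    simp
  rw [this]
  simp

end VLR6

namespace VLR7
open VLR VLR2 VLR3 VLR4 VLR5 VLR6

lemma card_verts (lam d : ℕ) : (verts lam d).card = Nat.choose (2 * d * lam) (d * lam) := by
  have h1 : verts lam d = Finset.powersetCard (d * lam) (W lam d) := by
    rw [Finset.powersetCard_eq_filter]
    rfl
  rw [h1, Finset.card_powersetCard, card_W]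

theorem Vinf_linear_recurrence (lam d : ℕ) (hlam : 0 < lam) :
    ∀ j : ℕ, ∑ k ∈ Finset.range (Nat.choose (2 * d * lam) (d * lam) + 1),
      (Matrix.charpoly (AHZ lam d)).coeff k * (Vinf (j + k) lam d : ℤ) = 0 := by
  intro j
  set n := Nat.choose (2 * d * lam) (d * lam) with hn
  set A := AHZ lam d with hA
  set v : {p // p ∈ verts lam d} := ⟨vtx lam d, vtx_mem_verts lam d⟩ with hv
  have hcardv : Fintype.card {P // P ∈ verts lam d} = n := by
    rw [Fintype.card_coe, card_verts]
  have hdeg : (Matrix.charpoly A).natDegree = n := by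
    rw [Matrix.charpoly_natDegree_eq_dim, hcardv]
  have hCH : ∑ k ∈ Finset.range (n + 1), (Matrix.charpoly A).coeff k • A ^ k = 0 := by
    rw [← hdeg, ← Polynomial.aeval_eq_sum_range]
    exact Matrix.aeval_self_charpoly A
  calc ∑ k ∈ Finset.range (n + 1), (Matrix.charpoly A).coeff k * (Vinf (j + k) lam d : ℤ)
      = ∑ k ∈ Finset.range (n + 1), (Matrix.charpoly A).coeff k * (A ^ (j + k)) v v := by
        apply Finset.sum_congr rfl
        intro k _
        rw [Vinf_eq (j + k) lam d hlam]
    _ = ∑ k ∈ Finset.range (n + 1), ∑ y : {p // p ∈ verts lam d},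
          (Matrix.charpoly A).coeff k * ((A ^ j) v y * (A ^ k) y v) := by
        apply Finset.sum_congr rfl
        intro k _
        rw [pow_add, Matrix.mul_apply, Finset.mul_sum]
    _ = ∑ y : {p // p ∈ verts lam d}, ∑ k ∈ Finset.range (n + 1),
          (Matrix.charpoly A).coeff k * ((A ^ j) v y * (A ^ k) y v) := Finset.sum_comm
    _ = ∑ y : {p // p ∈ verts lam d}, (A ^ j) v y *
          ∑ k ∈ Finset.range (n + 1), (Matrix.charpoly A).coeff k * (A ^ k) y v := by
        apply Finset.sum_congr rfl
        intro y _
        rw [Finset.mul_sum]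
        apply Finset.sum_congr rfl
        intro k _
        ring
    _ = 0 := by
        apply Finset.sum_eq_zero
        intro y _
        have h2 : (∑ k ∈ Finset.range (n + 1), (Matrix.charpoly A).coeff k • A ^ k) y v
            = (0 : Matrix {p // p ∈ verts lam d} {p // p ∈ verts lam d} ℤ) y v := by
          rw [hCH]
        rw [Matrix.sum_apply] at h2
        simp only [Matrix.smul_apply, smul_eq_mul, Matrix.zero_apply] at h2
        rw [h2, mul_zero]

end VLR7

theorem Vinf_linear_recurrence (lam d : ℕ) (hlam : 0 < lam) :
    ∀ j : ℕ, ∑ k ∈ Finset.range (Nat.choose (2 * d * lam) (d * lam) + 1),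
      (Matrix.charpoly (AHZ lam d)).coeff k * (Vinf (j + k) lam d : ℤ) = 0 := by
  exact VLR7.Vinf_linear_recurrence lam d hlam
end

section
/- For the matrix A^{(λ,n,d)} with entries a_{i,j} = 1 iff |⌈i/λ⌉ − ⌈j/λ⌉| ≤ d, the permanent satisfies per(A^{(λ,n,d)}) = (λ!)^m · V_∞(λ, n, d); in particular per(A^{(2,8,1)}) for the displayed 8×8 matrix equals 2^4 · V_∞(2,8,1). -/
open scoped Classical

section Aux

variable {n m : ℕ}

/-- helper: value of a fiber equiv applied at a transported index. -/
lemma app_val_eq {f g : Fin n → Fin m}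
    (e : ∀ k : Fin m, {i // g i = k} ≃ {i // f i = k})
    {k : Fin m} (i : Fin n) (hi : g i = k) :
    ((e k) ⟨i, hi⟩).1 = ((e (g i)) ⟨i, rfl⟩).1 := by subst hi; rfl

lemma symm_val_eq {f g : Fin n → Fin m}
    (e : ∀ k : Fin m, {i // g i = k} ≃ {i // f i = k})
    {k : Fin m} (j : Fin n) (hj : f j = k) :
    ((e k).symm ⟨j, hj⟩).1 = ((e (f j)).symm ⟨j, rfl⟩).1 := by subst hj; rfl

/-- The set of permutations matching fibers of `g` to fibers of `f` is equivalent
to the product of fiberwise bijections. -/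
def fiberEquiv (f g : Fin n → Fin m) :
    {σ : Equiv.Perm (Fin n) // ∀ i, f (σ i) = g i} ≃
      (∀ k : Fin m, {i // g i = k} ≃ {i // f i = k}) where
  toFun σ k :=
    { toFun := fun x => ⟨σ.1 x.1, by rw [σ.2, x.2]⟩
      invFun := fun y => ⟨σ.1.symm y.1, by
        have h := σ.2 (σ.1.symm y.1)
        rw [Equiv.apply_symm_apply] at h
        rw [← h, y.2]⟩
      left_inv := fun x => Subtype.ext (σ.1.symm_apply_apply x.1)
      right_inv := fun y => Subtype.ext (σ.1.apply_symm_apply y.1) }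
  invFun e :=
    ⟨{ toFun := fun i => (e (g i) ⟨i, rfl⟩).1
       invFun := fun j => ((e (f j)).symm ⟨j, rfl⟩).1
       left_inv := by
         intro i
         dsimp only
         set y := e (g i) ⟨i, rfl⟩ with hy
         have h : f y.1 = g i := y.2
         rw [← symm_val_eq e y.1 h]
         have : (⟨y.1, h⟩ : {j // f j = g i}) = y := Subtype.ext rfl
         rw [this, hy, Equiv.symm_apply_apply]
       right_inv := by
         intro j
         dsimp only
         set x := (e (f j)).symm ⟨j, rfl⟩ with hx
         have h : g x.1 = f j := x.2
         rw [← app_val_eq e x.1 h]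
         have : (⟨x.1, h⟩ : {i // g i = f j}) = x := Subtype.ext rfl
         rw [this, hx, Equiv.apply_symm_apply] },
     fun i => (e (g i) ⟨i, rfl⟩).2⟩
  left_inv σ := Subtype.ext (Equiv.ext fun i => rfl)
  right_inv e := by
    funext k
    apply Equiv.ext
    rintro ⟨i, hi⟩
    exact Subtype.ext (app_val_eq e i hi).symm

lemma card_perm_fiber {f g : Fin n → Fin m} {lam : ℕ}
    (hf : ∀ k, Fintype.card {i // f i = k} = lam)
    (hg : ∀ k, Fintype.card {i // g i = k} = lam) :
    Fintype.card {σ : Equiv.Perm (Fin n) // ∀ i, f (σ i) = g i} =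
      (Nat.factorial lam) ^ m := by
  rw [Fintype.card_congr (fiberEquiv f g), Fintype.card_pi]
  have : ∀ k : Fin m,
      Fintype.card ({i // g i = k} ≃ {i // f i = k}) = Nat.factorial lam := by
    intro k
    have e : {i // g i = k} ≃ {i // f i = k} :=
      Fintype.equivOfCardEq (by rw [hf, hg])
    rw [Fintype.card_equiv e, hg]
  simp [this, Finset.prod_const]

end Aux

lemma card_fiber_ident (m lam : ℕ) (hlam : 0 < lam) (k : Fin m) :
    (Finset.univ.filter (fun i : Fin (m * lam) => ident m lam i = k)).card = lam := by
  have h := Finset.card_bij'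
    (s := Finset.univ.filter (fun i : Fin (m * lam) => ident m lam i = k))
    (t := (Finset.univ : Finset (Fin lam)))
    (i := fun a _ => ⟨a.val % lam, Nat.mod_lt _ hlam⟩)
    (j := fun b _ => ⟨k.val * lam + b.val, by
      have : k.val * lam + b.val < (k.val + 1) * lam := by
        have := b.isLt; nlinarith
      have h2 : (k.val + 1) * lam ≤ m * lam :=
        Nat.mul_le_mul_right lam k.isLt
      omega⟩)
    ?_ ?_ ?_ ?_
  · simpa using h
  · intro a _; exact Finset.mem_univ _
  · intro b _
    simp only [Finset.mem_filter, Finset.mem_univ, true_and]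
    apply Fin.ext
    show (k.val * lam + b.val) / lam = k.val
    rw [Nat.mul_comm k.val lam, Nat.mul_add_div hlam]
    simp [Nat.div_eq_of_lt b.isLt]
  · intro a ha
    simp only [Finset.mem_filter, Finset.mem_univ, true_and] at ha
    have hq : a.val / lam = k.val := congrArg Fin.val ha
    apply Fin.ext
    show k.val * lam + a.val % lam = a.val
    have h1 : lam * (a.val / lam) + a.val % lam = a.val := Nat.div_add_mod a.val lam
    rw [hq] at h1
    rw [Nat.mul_comm]
    omega
  · intro b _
    apply Fin.ext
    show (k.val * lam + b.val) % lam = b.val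
    rw [Nat.mul_comm, Nat.mul_add_mod]
    exact Nat.mod_eq_of_lt b.isLt

lemma main_eq (m lam d : ℕ) (hlam : 0 < lam) :
    perMat (Amat m lam d) = (Nat.factorial lam) ^ m * Vinf m lam d := by
  classical
  set n := m * lam
  set Φ : Equiv.Perm (Fin n) → (Fin n → Fin m) :=
    fun σ i => ident m lam (σ i) with hΦ
  set P : Equiv.Perm (Fin n) → Prop :=
    fun σ => ∀ i : Fin n, Nat.dist (i.val / lam) ((σ i).val / lam) ≤ d with hP
  -- Step 1: permanent is the number of permutations satisfying P
  have step1 : perMat (Amat m lam d) = (Finset.univ.filter P).card := by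
    unfold perMat Amat
    rw [Finset.sum_congr rfl (fun σ _ => Finset.prod_boole)]
    rw [← Nat.cast_id (Finset.univ.filter P).card, ← Finset.sum_boole]
    apply Finset.sum_congr rfl
    intro σ _
    simp [hP]
    exact if_congr Iff.rfl rfl rfl
  -- Φ σ is always a frequency permutation
  have hΦfp : ∀ σ : Equiv.Perm (Fin n), Φ σ ∈ FPset m lam := by
    intro σ
    simp only [FPset, Finset.mem_filter, Finset.mem_univ, true_and]
    intro k
    have h := Finset.card_bij'
      (s := Finset.univ.filter (fun i : Fin n => Φ σ i = k))
      (t := Finset.univ.filter (fun j : Fin n => ident m lam j = k))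
      (i := fun a _ => σ a) (j := fun b _ => σ.symm b)
      (fun a ha => by
        simp only [Finset.mem_filter, Finset.mem_univ, true_and] at ha ⊢
        exact ha)
      (fun b hb => by
        simp only [Finset.mem_filter, Finset.mem_univ, true_and] at hb ⊢
        simpa [hΦ] using hb)
      (fun a _ => σ.symm_apply_apply a)
      (fun b _ => σ.apply_symm_apply b)
    rw [h, card_fiber_ident m lam hlam k]
  -- cheb condition ↔ P
  have hcheb : ∀ σ : Equiv.Perm (Fin n), cheb (Φ σ) (ident m lam) ≤ d ↔ P σ := by
    intro σ
    unfold cheb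
    rw [Finset.sup_le_iff]
    constructor
    · intro h i
      have := h i (Finset.mem_univ i)
      rwa [Nat.dist_comm]
    · intro h i _
      rw [Nat.dist_comm]
      exact h i
  -- Step 2: fiberwise count over the ball
  have step2 : (Finset.univ.filter P).card =
      ∑ ρ ∈ ball m lam d (ident m lam),
        ((Finset.univ.filter P).filter (fun σ => Φ σ = ρ)).card := by
    apply Finset.card_eq_sum_card_fiberwise
    intro σ hσ
    simp only [Finset.mem_coe, Finset.mem_filter, Finset.mem_univ, true_and] at hσ
    simp only [Finset.mem_coe, ball, Finset.mem_filter]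
    exact ⟨hΦfp σ, (hcheb σ).mpr hσ⟩
  -- Step 3: each fiber has (lam!)^m elements
  have step3 : ∀ ρ ∈ ball m lam d (ident m lam),
      ((Finset.univ.filter P).filter (fun σ => Φ σ = ρ)).card =
        (Nat.factorial lam) ^ m := by
    intro ρ hρ
    simp only [ball, Finset.mem_filter] at hρ
    obtain ⟨hρfp, hρd⟩ := hρ
    simp only [FPset, Finset.mem_filter, Finset.mem_univ, true_and] at hρfp
    have hfil : (Finset.univ.filter P).filter (fun σ => Φ σ = ρ) =
        Finset.univ.filter (fun σ => ∀ i, ident m lam (σ i) = ρ i) := by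
      ext σ
      simp only [Finset.mem_filter, Finset.mem_univ, true_and]
      constructor
      · rintro ⟨_, h⟩
        intro i; rw [← h]
      · intro h
        have hfun : Φ σ = ρ := funext h
        exact ⟨(hcheb σ).mp (hfun ▸ hρd), hfun⟩
    rw [hfil, ← Fintype.card_subtype]
    apply card_perm_fiber
    · intro k
      rw [Fintype.card_subtype]
      exact card_fiber_ident m lam hlam k
    · intro k
      rw [Fintype.card_subtype]
      exact hρfp k
  rw [step1, step2, Finset.sum_congr rfl step3, Finset.sum_const, smul_eq_mul,
    Nat.mul_comm]
  rfl

theorem permanent_eq_factorial_mul_Vinf (m lam d : ℕ) (hlam : 0 < lam) :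
    perMat (Amat m lam d) = (Nat.factorial lam) ^ m * Vinf m lam d ∧
    perMat (Amat 4 2 1) = 2 ^ 4 * Vinf 4 2 1 := by
  refine ⟨main_eq m lam d hlam, ?_⟩
  rw [main_eq 4 2 1 (by norm_num)]
  norm_num [Nat.factorial]
end
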